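/- arXiv:math/0605523 — 8 statements merged into one kernel-verified Lean document; each statement's English description precedes it below -/
import Mathlib

section
/- Suppose A is a finite nonempty subset of a vector space over 𝔽₂ with |A+A| ≤ K|A|, and let s ≥ 1 be an integer. Then there exists a finite vector space G' over 𝔽₂ with |G'| ≤ K^(2s)|A|, a set A' ⊆ G', and a Freĭman s-isomorphism φ : A → A'. -/
open Finset Pointwise

private lemma neg_self_zmod2 {M : Type*} [AddCommGroup M] [Module (ZMod 2) M] (x : M) :
    -x = x :=
  neg_eq_of_add_eq_zero_left (by
    rw [← two_nsmul, ← Nat.cast_smul_eq_nsmul (ZMod 2),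
      show ((2 : ℕ) : ZMod 2) = 0 from rfl, zero_smul])

private lemma add_self_zmod2 {M : Type*} [AddCommGroup M] [Module (ZMod 2) M] (x : M) :
    x + x = 0 := by
  nth_rewrite 1 [← neg_self_zmod2 x]
  exact neg_add_cancel x

private lemma sum_mem_nsmul {M : Type*} [AddCommGroup M] [DecidableEq M] {A : Finset M}
    (m : Multiset M) (hm : ∀ x ∈ m, x ∈ A) : m.sum ∈ (Multiset.card m) • A := by
  induction m using Multiset.induction with
  | empty => simp [zero_nsmul, Finset.mem_zero]
  | cons a t ih =>
    rw [Multiset.card_cons, Multiset.sum_cons, succ_nsmul, add_comm a t.sum]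
    exact Finset.add_mem_add (ih fun x hx => hm x (Multiset.mem_cons_of_mem hx))
      (hm a (Multiset.mem_cons_self a t))

/-- Green–Ruzsa modelling lemma: a set of doubling `K` in a vector space over 𝔽₂ is
Freiman `s`-isomorphic to a subset of a finite 𝔽₂-vector space of size at most `K^{2s}|A|`. -/
theorem good_model
    (G : Type*) [AddCommGroup G] [Module (ZMod 2) G] [DecidableEq G]
    (A : Finset G) (hA : A.Nonempty) (K : ℝ) (hK : 1 ≤ K) (s : ℕ) (hs : 1 ≤ s)
    (hadd : ((A + A).card : ℝ) ≤ K * A.card) :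
    ∃ (G' : Type) (_ : AddCommGroup G') (_ : Module (ZMod 2) G') (_ : Fintype G'),
      (Fintype.card G' : ℝ) ≤ K ^ (2 * s) * A.card ∧
      ∃ (A' : Finset G') (φ : G → G'), IsAddFreimanIso s (A : Set G) (A' : Set G') φ := by
  classical
  set H := Submodule.span (ZMod 2) (A : Set G) with hHdef
  haveI : FiniteDimensional (ZMod 2) H := FiniteDimensional.span_of_finite _ A.finite_toSet
  haveI : Finite H := Module.finite_of_finite (ZMod 2)
  have hAH : ∀ a ∈ A, a ∈ H := fun a ha => Submodule.subset_span ha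
  set AH : Finset H := A.attach.image (fun a => (⟨a.1, hAH a.1 a.2⟩ : H)) with hAHdef
  have memAH : ∀ (x : H), x ∈ AH ↔ (x : G) ∈ A := by
    intro x
    constructor
    · intro hx
      rw [hAHdef, Finset.mem_image] at hx
      obtain ⟨a, _, rfl⟩ := hx
      exact a.2
    · intro hx
      rw [hAHdef, Finset.mem_image]
      exact ⟨⟨(x : G), hx⟩, Finset.mem_attach _ _, Subtype.ext rfl⟩
  -- cardinalities transfer
  have himg : AH.image (Subtype.val) = A := by
    ext g
    simp only [Finset.mem_image]
    constructor
    · rintro ⟨x, hx, rfl⟩; exact (memAH x).1 hx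
    · intro hg; exact ⟨⟨g, hAH g hg⟩, (memAH _).2 hg, rfl⟩
  have hcardAH : AH.card = A.card := by
    rw [← himg, Finset.card_image_of_injective _ Subtype.val_injective]
  have hAHne : AH.Nonempty := by
    rw [← Finset.card_pos, hcardAH, Finset.card_pos]; exact hA
  have himg2 : (AH + AH).image (Subtype.val) = A + A := by
    have : (AH + AH).image (⇑(H.subtype)) = AH.image (⇑(H.subtype)) + AH.image (⇑(H.subtype)) :=
      image_add H.subtype
    simpa [Submodule.coe_subtype, himg] using this
  have hcard2 : (AH + AH).card = (A + A).card := by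
    rw [← himg2, Finset.card_image_of_injective _ Subtype.val_injective]
  -- the sumset S = 2s • AH
  set S : Finset H := (2 * s) • AH with hSdef
  have hA0 : (0 : ℝ) < (A.card : ℝ) := by exact_mod_cast Finset.card_pos.2 hA
  -- Plünnecke–Ruzsa
  have hScard : (S.card : ℝ) ≤ K ^ (2 * s) * A.card := by
    have q := Finset.pluennecke_ruzsa_inequality_nsmul_add hAHne AH (2 * s)
    rw [hcardAH, hcard2, ← hSdef] at q
    have q2 := (NNRat.cast_le (K := ℝ)).mpr q
    push_cast at q2
    have hle : ((A + A).card / A.card : ℝ) ≤ K := by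
      rw [div_le_iff₀ hA0]; exact hadd
    calc (S.card : ℝ) ≤ ((A + A).card / A.card : ℝ) ^ (2 * s) * A.card := q2
      _ ≤ K ^ (2 * s) * A.card :=
          mul_le_mul_of_nonneg_right (pow_le_pow_left₀ (by positivity) hle _) (le_of_lt hA0)
  -- basic membership facts about S
  have hzeroS : (0 : H) ∈ S := by
    obtain ⟨a₀, ha₀⟩ := hAHne
    have h1 : (2 * s) • a₀ ∈ S := Finset.nsmul_mem_nsmul ha₀
    have h2 : (2 * s) • a₀ = 0 := by
      rw [← Nat.cast_smul_eq_nsmul (ZMod 2)]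
      push_cast
      simp [show ((2 : ZMod 2)) = 0 from rfl]
    rwa [h2] at h1
  have keyL : ∀ u v : Multiset H, (∀ x ∈ u, x ∈ AH) → (∀ x ∈ v, x ∈ AH) →
      Multiset.card u = s → Multiset.card v = s → u.sum - v.sum ∈ S := by
    intro u v hu hv hcu hcv
    have h1 : u.sum ∈ s • AH := by rw [← hcu]; exact sum_mem_nsmul u hu
    have h2 : v.sum ∈ s • AH := by rw [← hcv]; exact sum_mem_nsmul v hv
    have : u.sum - v.sum = u.sum + v.sum := by rw [sub_eq_add_neg, neg_self_zmod2]
    rw [this, hSdef, two_mul, add_nsmul]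
    exact Finset.add_mem_add h1 h2
  -- choose a maximal subspace V avoiding S \ {0}
  set P : Submodule (ZMod 2) H → Prop := fun V => ∀ x ∈ V, x ∈ S → x = 0 with hPdef
  have hbot : P ⊥ := fun x hx _ => by simpa using hx
  set N : Set ℕ := {n | ∃ V, P V ∧ Module.finrank (ZMod 2) V = n} with hNdef
  have hNne : N.Nonempty := ⟨_, ⊥, hbot, rfl⟩
  have hNbdd : BddAbove N := ⟨Module.finrank (ZMod 2) H, by
    rintro n ⟨V, _, rfl⟩; exact Submodule.finrank_le V⟩
  obtain ⟨V, hV, hVrank⟩ := Nat.sSup_mem hNne hNbdd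
  have hmax : ∀ W, P W → Module.finrank (ZMod 2) W ≤ Module.finrank (ZMod 2) V := by
    intro W hW
    rw [hVrank]
    exact le_csSup hNbdd ⟨W, hW, rfl⟩
  -- the quotient
  set Q := H ⧸ V with hQdef
  haveI : Finite Q := Finite.of_surjective V.mkQ (Submodule.mkQ_surjective V)
  haveI : Fintype Q := Fintype.ofFinite Q
  set π : H →ₗ[ZMod 2] Q := V.mkQ with hπdef
  -- every coset meets S
  have hsurj : ∀ x : H, ∃ y ∈ S, π y = π x := by
    intro x
    by_cases hx : x ∈ V
    · refine ⟨0, hzeroS, ?_⟩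
      rw [map_zero]
      exact ((Submodule.Quotient.mk_eq_zero V).2 hx).symm
    · set W := V ⊔ (ZMod 2) ∙ x with hWdef
      have hxW : x ∈ W := Submodule.mem_sup_right (Submodule.mem_span_singleton_self x)
      have hVW : V < W := lt_of_le_of_ne le_sup_left (fun h => hx (h ▸ hxW))
      have hnPW : ¬ P W := fun hPW =>
        absurd (hmax W hPW) (not_le.2 (Submodule.finrank_lt_finrank_of_lt hVW))
      simp only [hPdef] at hnPW
      push_neg at hnPW
      obtain ⟨y, hyW, hyS, hy0⟩ := hnPW
      rw [hWdef, Submodule.mem_sup] at hyW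
      obtain ⟨v, hv, z, hz, rfl⟩ := hyW
      rw [Submodule.mem_span_singleton] at hz
      obtain ⟨c, rfl⟩ := hz
      have hc : c = 0 ∨ c = 1 := (by decide : ∀ a : ZMod 2, a = 0 ∨ a = 1) c
      rcases hc with rfl | rfl
      · exfalso
        apply hy0
        exact hV _ (by simpa using hv) (by simpa using hyS)
      · refine ⟨v + (1 : ZMod 2) • x, hyS, ?_⟩
        rw [map_add, one_smul]
        have : π v = 0 := (Submodule.Quotient.mk_eq_zero V).2 hv
        rw [hπdef] at this ⊢
        rw [this, zero_add]
  -- injectivity of π on differences in S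
  have hinj : ∀ a b : H, a - b ∈ S → π a = π b → a = b := by
    intro a b hab hπab
    have : a - b ∈ V := by
      rwa [hπdef, Submodule.mkQ_apply, Submodule.mkQ_apply, Submodule.Quotient.eq] at hπab
    have := hV _ this hab
    exact sub_eq_zero.1 this
  -- card of Q
  have hcardQ : (Fintype.card Q : ℝ) ≤ (S.card : ℝ) := by
    have hsub : (Finset.univ : Finset Q) ⊆ S.image (fun y => π y) := by
      intro q _
      obtain ⟨x, rfl⟩ := Submodule.mkQ_surjective V q
      obtain ⟨y, hy, hyx⟩ := hsurj x
      exact Finset.mem_image.2 ⟨y, hy, hyx⟩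
    calc (Fintype.card Q : ℝ) = ((Finset.univ : Finset Q).card : ℝ) := by rw [Finset.card_univ]
      _ ≤ ((S.image (fun y => π y)).card : ℝ) := by exact_mod_cast Finset.card_le_card hsub
      _ ≤ (S.card : ℝ) := by exact_mod_cast Finset.card_image_le
  -- transport to Fin d → ZMod 2
  set d := Module.finrank (ZMod 2) Q with hddef
  set G' : Type := Fin d → ZMod 2 with hG'def
  set e : Q ≃ₗ[ZMod 2] G' := (Module.finBasis (ZMod 2) Q).equivFun with hedef
  refine ⟨G', inferInstance, inferInstance, inferInstance, ?_, ?_⟩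
  · have : Fintype.card G' = Fintype.card Q := (Fintype.card_congr e.toEquiv).symm
    rw [this]
    exact hcardQ.trans hScard
  · -- the Freiman isomorphism
    set F : H →ₗ[ZMod 2] G' := (e : Q →ₗ[ZMod 2] G').comp π with hFdef
    have hFinj : ∀ a b : H, a - b ∈ S → F a = F b → a = b := by
      intro a b hab hF
      apply hinj a b hab
      exact e.injective (by simpa [hFdef] using hF)
    set φ : G → G' := fun g => if h : g ∈ H then F ⟨g, h⟩ else 0 with hφdef
    have hφval : ∀ x : H, φ (x : G) = F x := by
      intro x
      rw [hφdef]
      simp only [dif_pos x.2]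
    refine ⟨AH.image (fun x => F x), φ, ?_⟩
    constructor
    · -- BijOn
      refine ⟨?_, ?_, ?_⟩
      · intro a ha
        have haH : a ∈ H := hAH a ha
        have : φ a = F ⟨a, haH⟩ := hφval ⟨a, haH⟩
        rw [Finset.coe_image]
        exact ⟨⟨a, haH⟩, (memAH _).2 ha, this.symm⟩
      · intro a ha b hb hab
        have haH : a ∈ H := hAH a ha
        have hbH : b ∈ H := hAH b hb
        rw [hφval ⟨a, haH⟩, hφval ⟨b, hbH⟩] at hab
        -- compare s-fold sums
        set u : Multiset H := ⟨a, haH⟩ ::ₘ Multiset.replicate (s - 1) ⟨a, haH⟩ with hudef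
        set v : Multiset H := ⟨b, hbH⟩ ::ₘ Multiset.replicate (s - 1) ⟨a, haH⟩ with hvdef
        have hcu : Multiset.card u = s := by
          rw [hudef, Multiset.card_cons, Multiset.card_replicate]; omega
        have hcv : Multiset.card v = s := by
          rw [hvdef, Multiset.card_cons, Multiset.card_replicate]; omega
        have hu : ∀ x ∈ u, x ∈ AH := by
          intro x hx
          rw [hudef, Multiset.mem_cons] at hx
          rcases hx with rfl | hx
          · exact (memAH _).2 ha
          · rw [Multiset.eq_of_mem_replicate hx]; exact (memAH _).2 ha
        have hv' : ∀ x ∈ v, x ∈ AH := by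
          intro x hx
          rw [hvdef, Multiset.mem_cons] at hx
          rcases hx with rfl | hx
          · exact (memAH _).2 hb
          · rw [Multiset.eq_of_mem_replicate hx]; exact (memAH _).2 ha
        have hsum : u.sum - v.sum ∈ S := keyL u v hu hv' hcu hcv
        have hFsum : F u.sum = F v.sum := by
          rw [hudef, hvdef, Multiset.sum_cons, Multiset.sum_cons, map_add, map_add, hab]
        have := hFinj _ _ hsum hFsum
        rw [hudef, hvdef, Multiset.sum_cons, Multiset.sum_cons] at this
        have h2 := add_right_cancel this
        exact congrArg Subtype.val h2
      · intro y hy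
        rw [Finset.coe_image] at hy
        obtain ⟨x, hx, rfl⟩ := hy
        refine ⟨(x : G), (memAH x).1 hx, ?_⟩
        exact hφval x
    · -- sums condition
      intro m t hmA htA hcm hct
      set M : Multiset H := m.pmap (fun x hx => (⟨x, hAH x hx⟩ : H)) hmA with hMdef
      set N2 : Multiset H := t.pmap (fun x hx => (⟨x, hAH x hx⟩ : H)) htA with hNdef2
      have hMval : M.map Subtype.val = m := by
        rw [hMdef, Multiset.map_pmap]
        exact (Multiset.pmap_eq_map _ id m hmA).trans (Multiset.map_id m)
      have hNval : N2.map Subtype.val = t := by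
        rw [hNdef2, Multiset.map_pmap]
        exact (Multiset.pmap_eq_map _ id t htA).trans (Multiset.map_id t)
      have hMmem : ∀ x ∈ M, x ∈ AH := by
        intro x hx
        rw [hMdef, Multiset.mem_pmap] at hx
        obtain ⟨a, ha, rfl⟩ := hx
        exact (memAH _).2 (hmA ha)
      have hNmem : ∀ x ∈ N2, x ∈ AH := by
        intro x hx
        rw [hNdef2, Multiset.mem_pmap] at hx
        obtain ⟨a, ha, rfl⟩ := hx
        exact (memAH _).2 (htA ha)
      have hMcard : Multiset.card M = s := by rw [hMdef, Multiset.card_pmap]; exact hcm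
      have hNcard : Multiset.card N2 = s := by rw [hNdef2, Multiset.card_pmap]; exact hct
      have hmapM : m.map φ = M.map (fun x => F x) := by
        conv_lhs => rw [← hMval]
        rw [Multiset.map_map]
        exact Multiset.map_congr rfl (fun x _ => hφval x)
      have hmapN : t.map φ = N2.map (fun x => F x) := by
        conv_lhs => rw [← hNval]
        rw [Multiset.map_map]
        exact Multiset.map_congr rfl (fun x _ => hφval x)
      have hsumM : (m.map φ).sum = F M.sum := by
        rw [hmapM]; exact (map_multiset_sum F M).symm
      have hsumN : (t.map φ).sum = F N2.sum := by
        rw [hmapN]; exact (map_multiset_sum F N2).symm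
      have hmsum : m.sum = (M.sum : G) := by
        conv_lhs => rw [← hMval]
        exact (map_multiset_sum (H.subtype.toAddMonoidHom) M).symm
      have htsum : t.sum = (N2.sum : G) := by
        conv_lhs => rw [← hNval]
        exact (map_multiset_sum (H.subtype.toAddMonoidHom) N2).symm
      rw [hsumM, hsumN, hmsum, htsum]
      constructor
      · intro h
        exact congrArg Subtype.val (hFinj _ _ (keyL M N2 hMmem hNmem hMcard hNcard) h)
      · intro h
        exact congrArg F (Subtype.ext h)
end

section
/- Let G = 𝔽₂ⁿ and let A ⊆ G be nonempty of density α = |A|/2ⁿ. Then 2A−2A = A+A+A+A contains a subspace of G of codimension at most C·α^(−1/2) for some absolute constant C. -/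
open Finset Pointwise

namespace F4

lemma zmod2_cases : ∀ c : ZMod 2, c = 0 ∨ c = 1 := by decide

def dotp {m : ℕ} (ζ x : Fin m → ZMod 2) : ZMod 2 := ∑ i, ζ i * x i

lemma dotp_add_right {m : ℕ} (ζ x y : Fin m → ZMod 2) :
    dotp ζ (x + y) = dotp ζ x + dotp ζ y := by
  simp [dotp, mul_add, Finset.sum_add_distrib]

lemma dotp_smul_right {m : ℕ} (ζ : Fin m → ZMod 2) (c : ZMod 2) (x : Fin m → ZMod 2) :
    dotp ζ (c • x) = c * dotp ζ x := by
  simp [dotp, Finset.mul_sum, smul_eq_mul]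
  congr 1; funext i; ring

lemma dotp_zero_right {m : ℕ} (ζ : Fin m → ZMod 2) : dotp ζ 0 = 0 := by simp [dotp]

lemma dotp_single_right {m : ℕ} (ζ : Fin m → ZMod 2) (i : Fin m) :
    dotp ζ (Pi.single i 1) = ζ i := by
  simp [dotp, Pi.single_apply]

lemma dotp_single_left {m : ℕ} (x : Fin m → ZMod 2) (i : Fin m) :
    dotp (Pi.single i 1) x = x i := by
  simp [dotp, Pi.single_apply]

lemma addself {m : ℕ} (v : Fin m → ZMod 2) : v + v = 0 := by
  funext i
  show v i + v i = 0
  rcases zmod2_cases (v i) with h | h <;> rw [h] <;> decide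

lemma add_eq_zero_iff {m : ℕ} (v w : Fin m → ZMod 2) : v + w = 0 ↔ v = w := by
  constructor
  · intro h
    have := congrArg (· + w) h
    simpa [add_assoc, addself] using this
  · rintro rfl; exact addself v

noncomputable def wF {m : ℕ} (ζ x : Fin m → ZMod 2) : ℝ := if dotp ζ x = 0 then 1 else -1

lemma wF_mul_right {m : ℕ} (ζ x y : Fin m → ZMod 2) :
    wF ζ (x + y) = wF ζ x * wF ζ y := by
  unfold wF
  rw [dotp_add_right]
  rcases zmod2_cases (dotp ζ x) with h | h <;> rcases zmod2_cases (dotp ζ y) with h' | h' <;>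
    rw [h, h'] <;>
    simp [show (1 : ZMod 2) + 1 = 0 from by decide, show (1 : ZMod 2) ≠ 0 from by decide]

lemma dotp_comm {m : ℕ} (ζ x : Fin m → ZMod 2) : dotp ζ x = dotp x ζ := by
  simp [dotp, mul_comm]

lemma wF_mul_left {m : ℕ} (ζ η x : Fin m → ZMod 2) :
    wF (ζ + η) x = wF ζ x * wF η x := by
  unfold wF
  rw [dotp_comm _ x, dotp_add_right, dotp_comm x ζ, dotp_comm x η]
  rcases zmod2_cases (dotp ζ x) with h | h <;> rcases zmod2_cases (dotp η x) with h' | h' <;>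
    rw [h, h'] <;>
    simp [show (1 : ZMod 2) + 1 = 0 from by decide, show (1 : ZMod 2) ≠ 0 from by decide]

lemma wF_zero_right {m : ℕ} (ζ : Fin m → ZMod 2) : wF ζ 0 = 1 := by
  simp [wF, dotp_zero_right]

lemma wF_sq {m : ℕ} (ζ x : Fin m → ZMod 2) : wF ζ x ^ 2 = 1 := by
  unfold wF; split <;> norm_num

lemma neg_one_le_wF {m : ℕ} (ζ x : Fin m → ZMod 2) : -1 ≤ wF ζ x := by
  unfold wF; split <;> norm_num

lemma card_G (m : ℕ) : Fintype.card (Fin m → ZMod 2) = 2 ^ m := by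
  simp

lemma sum_wF {m : ℕ} (x : Fin m → ZMod 2) :
    ∑ ζ : Fin m → ZMod 2, wF ζ x = if x = 0 then ((2 : ℝ) ^ m) else 0 := by
  split
  · next h =>
    subst h
    simp [wF_zero_right, Finset.card_univ, card_G]
  · next h =>
    obtain ⟨i, hi⟩ := Function.ne_iff.mp h
    have hxi : x i = 1 := by rcases zmod2_cases (x i) with h' | h' <;> simp_all
    set η : Fin m → ZMod 2 := Pi.single i 1 with hη
    have hdη : dotp η x = 1 := by rw [hη, dotp_single_left, hxi]
    have hwη : wF η x = -1 := by
      simp [wF, hdη, show (1 : ZMod 2) ≠ 0 from by decide]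
    have key : ∑ ζ : Fin m → ZMod 2, wF (ζ + η) x = ∑ ζ : Fin m → ZMod 2, wF ζ x :=
      Fintype.sum_bijective (· + η) (Equiv.addRight η).bijective _ _ (fun ζ => rfl)
    have key2 : ∑ ζ : Fin m → ZMod 2, wF (ζ + η) x
        = -∑ ζ : Fin m → ZMod 2, wF ζ x := by
      simp [wF_mul_left, hwη, Finset.sum_neg_distrib]
    linarith [key.symm.trans key2]


lemma expand4 {m : ℕ} (A : Finset (Fin m → ZMod 2)) (x : Fin m → ZMod 2)
    (ζ : Fin m → ZMod 2) :
    wF ζ x * (∑ a ∈ A, wF ζ a) ^ 4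
      = ∑ p ∈ A ×ˢ A ×ˢ A ×ˢ A,
          wF ζ (x + (p.1 + p.2.1 + p.2.2.1 + p.2.2.2)) := by
  have h : ∀ p ∈ A ×ˢ A ×ˢ A ×ˢ A,
      wF ζ (x + (p.1 + p.2.1 + p.2.2.1 + p.2.2.2))
        = wF ζ x * (wF ζ p.1 * (wF ζ p.2.1 * (wF ζ p.2.2.1 * wF ζ p.2.2.2))) := by
    intro p _
    rw [wF_mul_right, wF_mul_right, wF_mul_right, wF_mul_right]
    ring
  rw [Finset.sum_congr rfl h]
  simp only [Finset.sum_product]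
  simp only [← Finset.mul_sum, ← Finset.sum_mul]
  ring

lemma identity4 {m : ℕ} (A : Finset (Fin m → ZMod 2)) (x : Fin m → ZMod 2) :
    ∑ ζ : Fin m → ZMod 2, wF ζ x * (∑ a ∈ A, wF ζ a) ^ 4
      = ∑ p ∈ A ×ˢ A ×ˢ A ×ˢ A,
          (if p.1 + p.2.1 + p.2.2.1 + p.2.2.2 = x then ((2 : ℝ) ^ m) else 0) := by
  rw [Finset.sum_congr rfl (fun ζ _ => expand4 A x ζ), Finset.sum_comm]
  refine Finset.sum_congr rfl fun p _ => ?_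
  rw [sum_wF]
  by_cases hc2 : p.1 + p.2.1 + p.2.2.1 + p.2.2.2 = x
  · rw [if_pos hc2, if_pos (by rw [hc2, addself])]
  · rw [if_neg hc2, if_neg (fun hcon => hc2 (((add_eq_zero_iff x _).mp hcon).symm))]

lemma parseval {m : ℕ} (A : Finset (Fin m → ZMod 2)) :
    ∑ ζ : Fin m → ZMod 2, (∑ a ∈ A, wF ζ a) ^ 2 = (2 : ℝ) ^ m * A.card := by
  have h : ∀ ζ : Fin m → ZMod 2, (∑ a ∈ A, wF ζ a) ^ 2
      = ∑ p ∈ A ×ˢ A, wF ζ (p.1 + p.2) := by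
    intro ζ
    have h0 : ∀ p ∈ A ×ˢ A, wF ζ (p.1 + p.2) = wF ζ p.1 * wF ζ p.2 :=
      fun p _ => wF_mul_right ..
    rw [Finset.sum_congr rfl h0, sq, Finset.sum_mul_sum, Finset.sum_product]
  rw [Finset.sum_congr rfl (fun ζ _ => h ζ), Finset.sum_comm]
  have h2 : ∀ p ∈ A ×ˢ A, (∑ ζ : Fin m → ZMod 2, wF ζ (p.1 + p.2))
      = if p.1 = p.2 then ((2:ℝ)^m) else 0 := by
    intro p _
    rw [sum_wF]
    congr 1
    exact propext (add_eq_zero_iff _ _)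
  rw [Finset.sum_congr rfl h2, Finset.sum_product]
  simp [Finset.sum_ite_eq, mul_comm]

lemma wF_zero_left {m : ℕ} (x : Fin m → ZMod 2) : wF 0 x = 1 := by
  simp [wF, dotp, show ∀ y : ZMod 2, (0:ZMod 2) * y = 0 from by decide]

lemma terminal {m : ℕ} (A : Finset (Fin m → ZMod 2)) (hA : A.Nonempty)
    (hsmall : ∀ ζ : Fin m → ZMod 2, ζ ≠ 0 →
      (∑ a ∈ A, wF ζ a) ^ 2 ≤ (A.card : ℝ) ^ 3 / (2 : ℝ) ^ m / 2)
    (x : Fin m → ZMod 2) : x ∈ A + A + A + A := by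
  have hN : (0:ℝ) < (2:ℝ)^m := by positivity
  have hcard : (0:ℝ) < (A.card : ℝ) := by exact_mod_cast Finset.card_pos.mpr hA
  set c : ℝ := (A.card : ℝ) ^ 3 / (2 : ℝ) ^ m / 2 with hc
  have hc0 : 0 ≤ c := by positivity
  have hS0 : (∑ a ∈ A, wF (0 : Fin m → ZMod 2) a) = (A.card : ℝ) := by
    rw [Finset.sum_congr rfl (fun a _ => wF_zero_left a)]; simp
  have hsplit : ∑ ζ : Fin m → ZMod 2, wF ζ x * (∑ a ∈ A, wF ζ a) ^ 4
      = (A.card : ℝ)^4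
        + ∑ ζ ∈ Finset.univ.erase 0, wF ζ x * (∑ a ∈ A, wF ζ a) ^ 4 := by
    rw [← Finset.add_sum_erase _ _ (Finset.mem_univ 0), hS0, wF_zero_left]
    ring
  have hterm : ∀ ζ ∈ Finset.univ.erase (0 : Fin m → ZMod 2),
      -(c * (∑ a ∈ A, wF ζ a) ^ 2) ≤ wF ζ x * (∑ a ∈ A, wF ζ a) ^ 4 := by
    intro ζ hζ
    have hζ0 : ζ ≠ 0 := (Finset.mem_erase.mp hζ).1
    have h1 := hsmall ζ hζ0
    have hw := neg_one_le_wF ζ x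
    nlinarith [sq_nonneg ((∑ a ∈ A, wF ζ a) ^ 2), sq_nonneg (∑ a ∈ A, wF ζ a)]
  have htail1 : ∑ ζ ∈ Finset.univ.erase (0 : Fin m → ZMod 2),
        -(c * (∑ a ∈ A, wF ζ a) ^ 2)
      ≤ ∑ ζ ∈ Finset.univ.erase 0, wF ζ x * (∑ a ∈ A, wF ζ a) ^ 4 :=
    Finset.sum_le_sum hterm
  have htail2 : ∑ ζ ∈ Finset.univ.erase (0 : Fin m → ZMod 2), (∑ a ∈ A, wF ζ a) ^ 2
      ≤ (2:ℝ)^m * A.card := by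
    rw [← parseval A]
    exact Finset.sum_le_sum_of_subset_of_nonneg (Finset.subset_univ _)
      (fun ζ _ _ => sq_nonneg _)
  have hpos : 0 < ∑ ζ : Fin m → ZMod 2, wF ζ x * (∑ a ∈ A, wF ζ a) ^ 4 := by
    rw [hsplit]
    have e1 : ∑ ζ ∈ Finset.univ.erase (0 : Fin m → ZMod 2),
        -(c * (∑ a ∈ A, wF ζ a) ^ 2)
        = -(c * ∑ ζ ∈ Finset.univ.erase (0 : Fin m → ZMod 2), (∑ a ∈ A, wF ζ a) ^ 2) := by
      rw [Finset.mul_sum]; simp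
    have e2 : c * ∑ ζ ∈ Finset.univ.erase (0 : Fin m → ZMod 2), (∑ a ∈ A, wF ζ a) ^ 2
        ≤ c * ((2:ℝ)^m * A.card) := mul_le_mul_of_nonneg_left htail2 hc0
    have e3 : c * ((2:ℝ)^m * A.card) = (A.card:ℝ)^4 / 2 := by
      rw [hc]; field_simp
    nlinarith [htail1, pow_pos hcard 4]
  rw [identity4] at hpos
  obtain ⟨p, hp, hne⟩ := Finset.exists_ne_zero_of_sum_ne_zero (ne_of_gt hpos)
  have hcond : p.1 + p.2.1 + p.2.2.1 + p.2.2.2 = x := by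
    by_contra hcon
    rw [if_neg hcon] at hne
    exact hne rfl
  have h1 := (Finset.mem_product.mp hp).1
  have hrest := (Finset.mem_product.mp hp).2
  have h2 := (Finset.mem_product.mp hrest).1
  have hrest2 := (Finset.mem_product.mp hrest).2
  have h3 := (Finset.mem_product.mp hrest2).1
  have h4 := (Finset.mem_product.mp hrest2).2
  rw [← hcond]
  exact Finset.add_mem_add (Finset.add_mem_add (Finset.add_mem_add h1 h2) h3) h4

lemma sum_wF_eq_card_sub {m : ℕ} (A : Finset (Fin m → ZMod 2)) (ζ : Fin m → ZMod 2) :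
    ∑ a ∈ A, wF ζ a
      = ((A.filter (fun a => dotp ζ a = 0)).card : ℝ)
        - ((A.filter (fun a => ¬ dotp ζ a = 0)).card : ℝ) := by
  have h : ∀ a ∈ A, wF ζ a = if dotp ζ a = 0 then (1:ℝ) else -1 := fun a _ => rfl
  rw [Finset.sum_congr rfl h, Finset.sum_ite]
  simp [sub_eq_add_neg]

lemma exists_dotp {m : ℕ} {ζ : Fin m → ZMod 2} (hζ : ζ ≠ 0) (c : ZMod 2) :
    ∃ x₀, dotp ζ x₀ = c := by
  obtain ⟨i, hi⟩ := Function.ne_iff.mp hζ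
  have h1 : ζ i = 1 := by
    rcases zmod2_cases (ζ i) with h | h
    · exact absurd (by simpa using h) hi
    · exact h
  exact ⟨c • Pi.single i 1, by rw [dotp_smul_right, dotp_single_right, h1, mul_one]⟩

noncomputable def fdot {m : ℕ} (ζ : Fin m → ZMod 2) :
    (Fin m → ZMod 2) →ₗ[ZMod 2] ZMod 2 where
  toFun x := dotp ζ x
  map_add' x y := dotp_add_right ζ x y
  map_smul' c x := by simp [dotp_smul_right]

lemma finrank_G (m : ℕ) : Module.finrank (ZMod 2) (Fin m → ZMod 2) = m := by
  simp [Module.finrank_pi]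

lemma finrank_ker {m : ℕ} {ζ : Fin m → ZMod 2} (hζ : ζ ≠ 0) :
    Module.finrank (ZMod 2) (LinearMap.ker (fdot ζ)) + 1 = m := by
  have hsurj : Function.Surjective (fdot ζ) := by
    intro c
    obtain ⟨x₀, hx₀⟩ := exists_dotp hζ c
    exact ⟨x₀, hx₀⟩
  have h := LinearMap.finrank_range_add_finrank_ker (fdot ζ)
  rw [LinearMap.range_eq_top.mpr hsurj, finrank_top, finrank_G] at h
  have h2 : Module.finrank (ZMod 2) (ZMod 2) = 1 := Module.finrank_self _
  omega

lemma arith {β β'' : ℝ} (hβ : 0 < β) (h : β + β * Real.sqrt β / 2 ≤ β'') (h1 : β'' ≤ 1) :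
    1 + 8 / Real.sqrt β'' ≤ 8 / Real.sqrt β := by
  set u := Real.sqrt β with hudef
  have hu : 0 < u := Real.sqrt_pos.mpr hβ
  have hu2 : u ^ 2 = β := Real.sq_sqrt hβ.le
  have hβ'' : 0 < β'' := lt_of_lt_of_le (by positivity) h
  set v := Real.sqrt β'' with hvdef
  have hv : 0 < v := Real.sqrt_pos.mpr hβ''
  have hv2 : v ^ 2 = β'' := Real.sq_sqrt hβ''.le
  have hv1 : v ≤ 1 := by rw [hvdef, show (1:ℝ) = Real.sqrt 1 by simp]; exact Real.sqrt_le_sqrt h1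
  have hu1 : u ≤ 1 := by nlinarith
  have hC : u ^ 2 + u ^ 3 / 2 ≤ v ^ 2 := by
    have h3 : β * Real.sqrt β = u ^ 3 := by rw [← hudef, ← hu2]; ring
    nlinarith [h]
  have hkey : u * v + 8 * u ≤ 8 * v := by
    by_contra hcon
    push_neg at hcon
    have hb1 : v < 9 * u / 8 := by nlinarith
    nlinarith [mul_pos hu hu, mul_pos (mul_pos hu hu) hu, mul_pos (mul_pos hu hu) hv,
      mul_lt_mul_of_pos_left hb1 (mul_pos hu hu)]
  have e1 : 1 + 8 / v = (v + 8) / v := by field_simp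
  rw [e1, div_le_div_iff₀ hv hu]
  nlinarith [hkey]

set_option maxHeartbeats 2000000 in
lemma main : ∀ (m : ℕ) (A : Finset (Fin m → ZMod 2)), A.Nonempty →
    ∃ V : Submodule (ZMod 2) (Fin m → ZMod 2),
      (V : Set (Fin m → ZMod 2)) ⊆ (↑(A + A + A + A) : Set (Fin m → ZMod 2)) ∧
      (m : ℝ) - Module.finrank (ZMod 2) V ≤ 8 / Real.sqrt ((A.card : ℝ) / 2 ^ m) := by
  intro m
  induction m using Nat.strong_induction_on with
  | _ m ih =>
    intro A hA
    have hN : (0:ℝ) < 2 ^ m := by positivity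
    have hcard : (0:ℝ) < (A.card : ℝ) := by exact_mod_cast Finset.card_pos.mpr hA
    have hβ0 : 0 < (A.card : ℝ) / 2 ^ m := by positivity
    by_cases hbig : ∃ ζ : Fin m → ZMod 2, ζ ≠ 0 ∧
        (A.card : ℝ) * Real.sqrt ((A.card : ℝ) / 2 ^ m) / 2 ≤ |∑ a ∈ A, wF ζ a|
    · -- density increment case
      obtain ⟨ζ, hζ, hS⟩ := hbig
      obtain ⟨i, _⟩ := Function.ne_iff.mp hζ
      have hmpos : 0 < m := i.pos
      obtain ⟨k, rfl⟩ : ∃ k, m = k + 1 := ⟨m - 1, by omega⟩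
      set β : ℝ := (A.card : ℝ) / 2 ^ (k+1) with hβdef
      set T : ℝ := (A.card : ℝ) * Real.sqrt β / 2 with hTdef
      have hT0 : 0 ≤ T := by positivity
      -- find a coset with large density
      have hcoset : ∃ x₀ : Fin (k+1) → ZMod 2,
          ((A.card : ℝ) + T) / 2 ≤ ((A.filter (fun a => dotp ζ a = dotp ζ x₀)).card : ℝ) := by
        have hsum0 : ((A.filter (fun a => dotp ζ a = 0)).card : ℝ)
            + ((A.filter (fun a => ¬ dotp ζ a = 0)).card : ℝ) = (A.card : ℝ) := by
          exact_mod_cast Finset.card_filter_add_card_filter_not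
            (p := fun a => dotp ζ a = 0)
        have hdiff := sum_wF_eq_card_sub A ζ
        rcases le_or_gt 0 (∑ a ∈ A, wF ζ a) with hsgn | hsgn
        · refine ⟨0, ?_⟩
          have : ∀ a, (dotp ζ a = dotp ζ 0) = (dotp ζ a = 0) := by
            intro a; rw [dotp_zero_right]
          simp only [this]
          rw [abs_of_nonneg hsgn] at hS
          linarith
        · obtain ⟨x₀, hx₀⟩ := exists_dotp hζ 1
          refine ⟨x₀, ?_⟩
          have hfc : (A.filter (fun a => dotp ζ a = dotp ζ x₀))
              = (A.filter (fun a => ¬ dotp ζ a = 0)) := by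
            apply Finset.filter_congr
            intro a _
            rw [hx₀]
            rcases zmod2_cases (dotp ζ a) with h | h <;> rw [h] <;> simp
          rw [hfc]
          rw [abs_of_neg hsgn] at hS
          linarith
      obtain ⟨x₀, hx₀card⟩ := hcoset
      set Asub := A.filter (fun a => dotp ζ a = dotp ζ x₀) with hAsubdef
      set B' := Asub.image (· + x₀) with hB'def
      have hB'card : (B'.card : ℝ) = (Asub.card : ℝ) := by
        rw [hB'def, Finset.card_image_of_injective _ (add_left_injective x₀)]
      have hB'ker : ∀ b ∈ B', dotp ζ b = 0 := by
        intro b hb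
        obtain ⟨a, ha, rfl⟩ := Finset.mem_image.mp hb
        have ha2 := (Finset.mem_filter.mp ha).2
        rw [dotp_add_right, ha2]
        rcases zmod2_cases (dotp ζ x₀) with h | h <;> rw [h] <;> decide
      -- B' + B' + B' + B' ⊆ A + A + A + A
      have hB'sub : (B' + B' + B' + B' : Finset (Fin (k+1) → ZMod 2)) ⊆ A + A + A + A := by
        intro y hy
        obtain ⟨u1, hu1, b4, hb4, rfl⟩ := Finset.mem_add.mp hy
        obtain ⟨u2, hu2, b3, hb3, rfl⟩ := Finset.mem_add.mp hu1
        obtain ⟨b1, hb1, b2, hb2, rfl⟩ := Finset.mem_add.mp hu2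
        obtain ⟨a1, ha1, rfl⟩ := Finset.mem_image.mp hb1
        obtain ⟨a2, ha2, rfl⟩ := Finset.mem_image.mp hb2
        obtain ⟨a3, ha3, rfl⟩ := Finset.mem_image.mp hb3
        obtain ⟨a4, ha4, rfl⟩ := Finset.mem_image.mp hb4
        have he : (a1 + x₀) + (a2 + x₀) + (a3 + x₀) + (a4 + x₀)
            = (a1 + a2 + a3 + a4) + ((x₀ + x₀) + (x₀ + x₀)) := by abel
        rw [he, addself x₀]
        simp only [add_zero, zero_add]
        exact Finset.add_mem_add (Finset.add_mem_add
          (Finset.add_mem_add (Finset.filter_subset _ _ ha1) (Finset.filter_subset _ _ ha2))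
          (Finset.filter_subset _ _ ha3)) (Finset.filter_subset _ _ ha4)
      -- pass to the kernel hyperplane
      have hB'mem : ∀ b ∈ B', b ∈ LinearMap.ker (fdot ζ) := by
        intro b hb
        exact LinearMap.mem_ker.mpr (hB'ker b hb)
      have hkerrank : Module.finrank (ZMod 2) (LinearMap.ker (fdot ζ)) = k := by
        have := finrank_ker hζ
        omega
      obtain ⟨e⟩ : Nonempty ((Fin k → ZMod 2) ≃ₗ[ZMod 2] LinearMap.ker (fdot ζ)) :=
        FiniteDimensional.nonempty_linearEquiv_of_finrank_eq (by rw [finrank_G, hkerrank])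
      obtain ⟨B'', hB''card0, hB''mem⟩ :
          ∃ B'' : Finset (Fin k → ZMod 2), B''.card = B'.card ∧
            ∀ b ∈ B'', ((e b : LinearMap.ker (fdot ζ)) : Fin (k+1) → ZMod 2) ∈ B' := by
        have hinj : Function.Injective
            (fun b : {x // x ∈ B'} => e.symm ⟨b.1, hB'mem b.1 b.2⟩) := by
          intro b1 b2 hb
          have h1 := e.symm.injective hb
          rw [Subtype.mk.injEq] at h1
          exact Subtype.ext h1
        refine ⟨B'.attach.image (fun b => e.symm ⟨b.1, hB'mem b.1 b.2⟩), ?_, ?_⟩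
        · rw [Finset.card_image_of_injective _ hinj, Finset.card_attach]
        · intro b hb
          obtain ⟨b0, hb0, rfl⟩ := Finset.mem_image.mp hb
          rw [LinearEquiv.apply_symm_apply]
          exact b0.2
      have hB''card : (B''.card : ℝ) = (B'.card : ℝ) := by exact_mod_cast hB''card0
      have hB''ne : B''.Nonempty := by
        rw [← Finset.card_pos]
        have : (0:ℝ) < (B''.card : ℝ) := by
          rw [hB''card, hB'card]; linarith
        exact_mod_cast this
      obtain ⟨W'', hW''sub, hW''rank⟩ := ih k (by omega) B'' hB''ne
      set V : Submodule (ZMod 2) (Fin (k+1) → ZMod 2) :=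
        (W''.map e.toLinearMap).map (LinearMap.ker (fdot ζ)).subtype with hVdef
      have hVrank : Module.finrank (ZMod 2) V = Module.finrank (ZMod 2) W'' := by
        rw [hVdef, Submodule.finrank_map_subtype_eq, LinearEquiv.finrank_map_eq]
      refine ⟨V, ?_, ?_⟩
      · -- V ⊆ A + A + A + A
        intro x hx
        obtain ⟨z, hz, rfl⟩ := Submodule.mem_map.mp hx
        obtain ⟨w, hw, rfl⟩ := Submodule.mem_map.mp hz
        have hw4 : w ∈ (B'' + B'' + B'' + B'' : Finset (Fin k → ZMod 2)) := hW''sub hw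
        obtain ⟨u1, hu1, b4, hb4, rfl⟩ := Finset.mem_add.mp hw4
        obtain ⟨u2, hu2, b3, hb3, rfl⟩ := Finset.mem_add.mp hu1
        obtain ⟨b1, hb1, b2, hb2, rfl⟩ := Finset.mem_add.mp hu2
        have hco : ((LinearMap.ker (fdot ζ)).subtype (e.toLinearMap (b1 + b2 + b3 + b4)))
            = ((e b1 : LinearMap.ker (fdot ζ)) : Fin (k+1) → ZMod 2)
              + ((e b2 : LinearMap.ker (fdot ζ)) : Fin (k+1) → ZMod 2)
              + ((e b3 : LinearMap.ker (fdot ζ)) : Fin (k+1) → ZMod 2)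
              + ((e b4 : LinearMap.ker (fdot ζ)) : Fin (k+1) → ZMod 2) := by
          simp [map_add]
        refine Finset.mem_coe.mpr (hB'sub ?_)
        rw [hco]
        exact Finset.add_mem_add (Finset.add_mem_add
          (Finset.add_mem_add (hB''mem b1 hb1) (hB''mem b2 hb2)) (hB''mem b3 hb3))
          (hB''mem b4 hb4)
      · -- codimension bound
        have hNk : (0:ℝ) < 2 ^ k := by positivity
        have hβ''def : (0:ℝ) < (B''.card : ℝ) / 2 ^ k := by
          have : (0:ℝ) < (B''.card : ℝ) := by rw [hB''card, hB'card]; linarith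
          positivity
        have hgrow : β + β * Real.sqrt β / 2 ≤ (B''.card : ℝ) / 2 ^ k := by
          have he2 : β + β * Real.sqrt β / 2 = (((A.card : ℝ) + T) / 2) / 2 ^ k := by
            rw [hTdef, hβdef]
            have h2 : ((2:ℝ) ^ (k+1)) = 2 * 2 ^ k := by ring
            rw [h2]
            field_simp
          rw [he2]
          rw [div_le_div_iff_of_pos_right hNk]
          rw [hB''card, hB'card]
          exact hx₀card
        have hβ''le1 : (B''.card : ℝ) / 2 ^ k ≤ 1 := by
          rw [div_le_one hNk]
          have hc := Finset.card_le_univ B''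
          rw [card_G] at hc
          exact_mod_cast hc
        have harith := arith hβ0 hgrow hβ''le1
        rw [hVrank]
        push_cast
        linarith [hW''rank, harith]
    · -- terminal case
      push_neg at hbig
      refine ⟨⊤, ?_, ?_⟩
      · intro x _
        refine Finset.mem_coe.mpr (terminal A hA (fun ξ hξ => ?_) x)
        have h1 := hbig ξ hξ
        have h2 : |∑ a ∈ A, wF ξ a| ^ 2
            ≤ ((A.card : ℝ) * Real.sqrt ((A.card : ℝ) / 2 ^ m) / 2) ^ 2 := by
          apply pow_le_pow_left₀ (abs_nonneg _) h1.le
        rw [sq_abs] at h2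
        have h3 : ((A.card : ℝ) * Real.sqrt ((A.card : ℝ) / 2 ^ m) / 2) ^ 2
            = (A.card : ℝ) ^ 2 * ((A.card : ℝ) / 2 ^ m) / 4 := by
          rw [div_pow, mul_pow, Real.sq_sqrt hβ0.le]
          ring
        rw [h3] at h2
        have h4 : (A.card : ℝ) ^ 2 * ((A.card : ℝ) / 2 ^ m) / 4 ≤ (A.card : ℝ) ^ 3 / 2 ^ m / 2 := by
          have e4 : (A.card : ℝ) ^ 2 * ((A.card : ℝ) / 2 ^ m) / 4
              = (A.card : ℝ) ^ 3 / (2 ^ m * 4) := by ring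
          have e5 : (A.card : ℝ) ^ 3 / 2 ^ m / 2 = (A.card : ℝ) ^ 3 / (2 ^ m * 2) := by ring
          rw [e4, e5]
          apply div_le_div_of_nonneg_left (pow_nonneg hcard.le 3) (by linarith) (by linarith)
        linarith
      · rw [finrank_top, finrank_G]
        simp only [sub_self]
        positivity

end F4

/-- If `A ⊆ 𝔽₂ⁿ` has density `α` then `A+A+A+A` contains a subspace of codimension
`O(α^{-1/2})`. -/
theorem fourfold_sumset_contains_subspace :
    ∃ C : ℝ, 0 < C ∧
      ∀ (n : ℕ) (A : Finset (Fin n → ZMod 2)), A.Nonempty →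
        ∃ V : Submodule (ZMod 2) (Fin n → ZMod 2),
          (V : Set (Fin n → ZMod 2)) ⊆ (↑(A + A + A + A) : Set (Fin n → ZMod 2)) ∧
          ((n : ℝ) - Module.finrank (ZMod 2) V) ≤
            C * ((A.card : ℝ) / 2 ^ n) ^ (-(1 : ℝ) / 2) := by
  refine ⟨8, by norm_num, ?_⟩
  intro n A hA
  obtain ⟨V, hVsub, hVrank⟩ := F4.main n A hA
  refine ⟨V, hVsub, ?_⟩
  have hβ0 : 0 < (A.card : ℝ) / 2 ^ n := by
    have : (0:ℝ) < (A.card : ℝ) := by exact_mod_cast Finset.card_pos.mpr hA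
    positivity
  have hconv : ((A.card : ℝ) / 2 ^ n) ^ (-(1 : ℝ) / 2)
      = 1 / Real.sqrt ((A.card : ℝ) / 2 ^ n) := by
    rw [show (-(1:ℝ)/2) = -(1/2) by norm_num, Real.rpow_neg hβ0.le,
      ← Real.sqrt_eq_rpow, one_div]
  rw [hconv]
  calc (n : ℝ) - Module.finrank (ZMod 2) V ≤ 8 / Real.sqrt ((A.card : ℝ) / 2 ^ n) := hVrank
    _ = 8 * (1 / Real.sqrt ((A.card : ℝ) / 2 ^ n)) := by ring
end

section
/- Let G = 𝔽₂ⁿ and A ⊆ G nonempty of density α. Then at least one of the following holds: (i) A+A+A+A = G; or (ii) there exist a subspace W ≤ G of codimension 1, an element x ∈ G, and a set A' ⊆ W with x+A' ⊆ A and |A'|/|W| ≥ α(1 + α^(1/2)/2). -/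
open Finset Pointwise

namespace IterAux

variable {n : ℕ}

/-! ### Characters of `𝔽₂ⁿ`, real-valued -/

noncomputable def e (ξ x : Fin n → ZMod 2) : ℝ :=
  if dotProduct ξ x = 0 then 1 else -1

lemma zmod2_cases (a : ZMod 2) : a = 0 ∨ a = 1 := by revert a; decide

lemma zmod2_add_self (a : ZMod 2) : a + a = 0 := by revert a; decide

lemma zmod2_add_eq_zero {a b : ZMod 2} : a + b = 0 ↔ a = b := by revert a b; decide

lemma zmod2_ne_zero : ∀ u : ZMod 2, (¬ u = 0) ↔ u = 1 := by decide

lemma e_one_or_neg_one (ξ x : Fin n → ZMod 2) : e ξ x = 1 ∨ e ξ x = -1 := by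
  unfold e; split <;> simp

lemma e_mul_right (ξ x y : Fin n → ZMod 2) : e ξ (x + y) = e ξ x * e ξ y := by
  unfold e
  rw [dotProduct_add]
  rcases zmod2_cases (dotProduct ξ x) with h | h <;>
    rcases zmod2_cases (dotProduct ξ y) with h' | h' <;>
      simp [h, h', show (1 + 1 : ZMod 2) = 0 from rfl]

lemma e_comm (ξ x : Fin n → ZMod 2) : e ξ x = e x ξ := by
  unfold e; rw [dotProduct_comm]

lemma e_zero_left (x : Fin n → ZMod 2) : e 0 x = 1 := by
  unfold e; simp [zero_dotProduct]

lemma exists_dot_one {ξ : Fin n → ZMod 2} (hξ : ξ ≠ 0) :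
    ∃ x, dotProduct ξ x = 1 := by
  have : ∃ i, ξ i ≠ 0 := by
    by_contra h
    push_neg at h
    exact hξ (funext fun i => h i)
  obtain ⟨i, hi⟩ := this
  have hξi : ξ i = 1 := (zmod2_cases (ξ i)).resolve_left hi
  refine ⟨Pi.single i 1, ?_⟩
  rw [dotProduct]
  rw [Finset.sum_eq_single i]
  · simp [hξi]
  · intro j _ hj; simp [Pi.single_eq_of_ne hj]
  · simp

lemma sum_e_right (ξ : Fin n → ZMod 2) :
    ∑ x : Fin n → ZMod 2, e ξ x = if ξ = 0 then (2 : ℝ) ^ n else 0 := by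
  split
  · subst ‹ξ = 0›
    simp only [e_zero_left, Finset.sum_const, Finset.card_univ, nsmul_eq_mul, mul_one]
    rw [Fintype.card_fun]
    push_cast
    simp
  · rename_i hξ
    obtain ⟨x₀, hx₀⟩ := exists_dot_one hξ
    have hshift : ∑ x : Fin n → ZMod 2, e ξ x = ∑ x : Fin n → ZMod 2, e ξ (x + x₀) :=
      (Fintype.sum_equiv (Equiv.addRight x₀) _ _ (fun x => rfl)).symm
    have hx₀' : e ξ x₀ = -1 := by unfold e; simp [hx₀]
    simp only [e_mul_right, hx₀', mul_neg, mul_one] at hshift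
    rw [Finset.sum_neg_distrib] at hshift
    linarith

lemma sum_e_left (x : Fin n → ZMod 2) :
    ∑ ξ : Fin n → ZMod 2, e ξ x = if x = 0 then (2 : ℝ) ^ n else 0 := by
  simp_rw [e_comm _ x]; exact sum_e_right x

lemma pi_add_eq_zero {a b : Fin n → ZMod 2} : a + b = 0 ↔ a = b := by
  constructor
  · intro h; funext i
    exact zmod2_add_eq_zero.mp (congrFun h i)
  · rintro rfl; funext i
    exact zmod2_add_eq_zero.mpr rfl

/-! ### Fourier coefficients -/

noncomputable def cf (A : Finset (Fin n → ZMod 2)) (ξ : Fin n → ZMod 2) : ℝ :=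
  ∑ a ∈ A, e ξ a

lemma cf_zero (A : Finset (Fin n → ZMod 2)) : cf A 0 = A.card := by
  unfold cf
  simp [e_zero_left]

lemma parseval (A : Finset (Fin n → ZMod 2)) :
    ∑ ξ : Fin n → ZMod 2, (cf A ξ) ^ 2 = 2 ^ n * A.card := by
  have h1 : ∀ ξ : Fin n → ZMod 2, (cf A ξ) ^ 2 = ∑ a ∈ A, ∑ b ∈ A, e ξ (a + b) := by
    intro ξ
    rw [sq, cf, Finset.sum_mul_sum]
    exact Finset.sum_congr rfl fun a _ => Finset.sum_congr rfl fun b _ =>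
      (e_mul_right ξ a b).symm
  simp_rw [h1]
  rw [Finset.sum_comm]
  have h2 : ∀ a ∈ A, ∑ ξ : Fin n → ZMod 2, ∑ b ∈ A, e ξ (a + b)
      = (2:ℝ) ^ n := by
    intro a ha
    rw [Finset.sum_comm]
    have : ∀ b ∈ A, ∑ ξ : Fin n → ZMod 2, e ξ (a + b)
        = if b = a then (2:ℝ)^n else 0 := by
      intro b _
      rw [sum_e_left (a + b)]
      congr 1
      simp only [eq_iff_iff, pi_add_eq_zero]
      exact ⟨fun h => h.symm, fun h => h.symm⟩
    rw [Finset.sum_congr rfl this, Finset.sum_ite_eq' A a (fun _ => (2:ℝ)^n), if_pos ha]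
  rw [Finset.sum_congr rfl h2]
  · simp [mul_comm]

lemma fourth_moment (A : Finset (Fin n → ZMod 2)) (t : Fin n → ZMod 2)
    (ht : ∀ a ∈ A, ∀ b ∈ A, ∀ c ∈ A, ∀ d ∈ A, a + b + c + d ≠ t) :
    ∑ ξ : Fin n → ZMod 2, (cf A ξ) ^ 4 * e ξ t = 0 := by
  have expand : ∀ ξ : Fin n → ZMod 2, (cf A ξ) ^ 4 * e ξ t
      = ∑ a ∈ A, ∑ b ∈ A, ∑ c ∈ A, ∑ d ∈ A, e ξ (a + b + c + d + t) := by
    intro ξ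
    have h1 : (cf A ξ) ^ 4 * e ξ t
        = ∑ a ∈ A, ∑ b ∈ A, ∑ c ∈ A, ∑ d ∈ A,
            e ξ a * e ξ b * e ξ c * e ξ d * e ξ t := by
      simp only [cf, pow_succ, pow_zero, one_mul, Finset.sum_mul, Finset.mul_sum]
      exact Finset.sum_congr rfl fun _ _ => Finset.sum_congr rfl fun _ _ =>
        Finset.sum_congr rfl fun _ _ => Finset.sum_congr rfl fun _ _ => by ring
    rw [h1]
    refine Finset.sum_congr rfl fun a _ => Finset.sum_congr rfl fun b _ =>
      Finset.sum_congr rfl fun c _ => Finset.sum_congr rfl fun d _ => ?_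
    simp only [e_mul_right]
  rw [Finset.sum_congr rfl fun ξ _ => expand ξ]
  rw [Finset.sum_comm]
  refine Finset.sum_eq_zero fun a ha => ?_
  rw [Finset.sum_comm]
  refine Finset.sum_eq_zero fun b hb => ?_
  rw [Finset.sum_comm]
  refine Finset.sum_eq_zero fun c hc => ?_
  rw [Finset.sum_comm]
  refine Finset.sum_eq_zero fun d hd => ?_
  rw [sum_e_left, if_neg]
  intro hs
  exact ht a ha b hb c hc d hd (pi_add_eq_zero.mp hs)

lemma exists_large_coeff (A : Finset (Fin n → ZMod 2)) (hA : A.Nonempty)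
    (t : Fin n → ZMod 2)
    (ht : ∀ a ∈ A, ∀ b ∈ A, ∀ c ∈ A, ∀ d ∈ A, a + b + c + d ≠ t) :
    ∃ ξ : Fin n → ZMod 2, ξ ≠ 0 ∧ (A.card : ℝ) ^ 3 / 2 ^ n ≤ cf A ξ ^ 2 := by
  set K : ℝ := (A.card : ℝ) with hK
  have hK1 : 1 ≤ K := by
    have h := hA.card_pos
    rw [hK]
    exact_mod_cast h
  have hK0 : 0 < K := lt_of_lt_of_le one_pos hK1
  have hN0 : (0:ℝ) < 2 ^ n := by positivity
  have hsplit := (Finset.add_sum_erase Finset.univ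
    (fun ξ => (cf A ξ) ^ 4 * e ξ t) (Finset.mem_univ 0)).symm
  rw [fourth_moment A t ht] at hsplit
  rw [cf_zero, e_zero_left, mul_one] at hsplit
  have hpow4 : ∀ ξ : Fin n → ZMod 2, (0:ℝ) ≤ cf A ξ ^ 4 := fun ξ => by positivity
  have hmain : K ^ 4 ≤ ∑ ξ ∈ Finset.univ.erase 0, (cf A ξ) ^ 4 := by
    have h1 : K ^ 4 = ∑ ξ ∈ Finset.univ.erase 0, -((cf A ξ) ^ 4 * e ξ t) := by
      rw [Finset.sum_neg_distrib]
      linarith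
    rw [h1]
    refine Finset.sum_le_sum fun ξ _ => ?_
    rcases e_one_or_neg_one ξ t with h | h <;> rw [h]
    · have := hpow4 ξ; linarith
    · simp
  by_contra hcon
  push_neg at hcon
  have hsum2 : ∑ ξ ∈ Finset.univ.erase 0, (cf A ξ) ^ 2 = 2 ^ n * K - K ^ 2 := by
    have hp := parseval A
    have hsplit2 := (Finset.add_sum_erase Finset.univ
      (fun ξ => (cf A ξ) ^ 2) (Finset.mem_univ 0)).symm
    rw [hp, cf_zero] at hsplit2
    have : (K:ℝ)^2 = (A.card:ℝ)^2 := by rw [hK]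
    nlinarith [hsplit2]
  have hbound : ∑ ξ ∈ Finset.univ.erase 0, (cf A ξ) ^ 4
      ≤ (K ^ 3 / 2 ^ n) * ∑ ξ ∈ Finset.univ.erase 0, (cf A ξ) ^ 2 := by
    rw [Finset.mul_sum]
    refine Finset.sum_le_sum fun ξ hξ => ?_
    have hne : ξ ≠ 0 := (Finset.mem_erase.mp hξ).1
    have h2 := (hcon ξ hne).le
    calc (cf A ξ) ^ 4 = (cf A ξ)^2 * (cf A ξ)^2 := by ring
      _ ≤ (K ^ 3 / 2 ^ n) * (cf A ξ)^2 :=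
        mul_le_mul_of_nonneg_right h2 (sq_nonneg _)
  rw [hsum2] at hbound
  have h3 : (K ^ 3 / 2 ^ n) * (2 ^ n * K - K ^ 2) = K ^ 4 - K ^ 5 / 2 ^ n := by
    field_simp
  have h4 : (0:ℝ) < K ^ 5 / 2 ^ n := by positivity
  linarith

/-! ### The subspace and counting -/

lemma cf_split (A : Finset (Fin n → ZMod 2)) (ξ : Fin n → ZMod 2) :
    cf A ξ = ((A.filter fun a => dotProduct ξ a = 0).card : ℝ)
      - ((A.filter fun a => ¬ dotProduct ξ a = 0).card : ℝ) := by
  unfold cf e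
  rw [Finset.sum_ite]
  simp [sub_eq_add_neg]

/-- The dot-product linear functional. -/
def φ (ξ : Fin n → ZMod 2) : (Fin n → ZMod 2) →ₗ[ZMod 2] ZMod 2 where
  toFun := fun y => dotProduct ξ y
  map_add' := fun y z => dotProduct_add ξ y z
  map_smul' := fun c y => by
    simp [dotProduct, Finset.mul_sum, mul_comm, mul_left_comm]

lemma finrank_ker {ξ : Fin n → ZMod 2} (hξ : ξ ≠ 0) :
    Module.finrank (ZMod 2) (LinearMap.ker (φ ξ)) + 1 = n := by
  obtain ⟨x₀, hx₀⟩ := exists_dot_one hξ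
  have hsurj : Function.Surjective (φ ξ) := by
    intro z
    rcases zmod2_cases z with rfl | rfl
    · exact ⟨0, map_zero _⟩
    · exact ⟨x₀, hx₀⟩
  have hrank := LinearMap.finrank_range_add_finrank_ker (φ ξ)
  rw [LinearMap.range_eq_top.mpr hsurj, finrank_top, Module.finrank_self,
    Module.finrank_fin_fun] at hrank
  omega

lemma card_ker {ξ : Fin n → ZMod 2} (hξ : ξ ≠ 0) :
    Nat.card (LinearMap.ker (φ ξ)) = 2 ^ (n - 1) := by
  haveI : Fintype (LinearMap.ker (φ ξ)) := Fintype.ofFinite _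
  rw [Nat.card_eq_fintype_card, Module.card_eq_pow_finrank (K := ZMod 2), ZMod.card]
  congr 1
  have := finrank_ker hξ
  omega

/-- Assembly of the density-increment branch. -/
lemma assemble (A : Finset (Fin n → ZMod 2)) (α : ℝ)
    (hα : α = (A.card : ℝ) / 2 ^ n) (hα0 : 0 ≤ α)
    (ξ : Fin n → ZMod 2) (hξ : ξ ≠ 0) (x : Fin n → ZMod 2) (v : ZMod 2)
    (hx : dotProduct ξ x = v)
    (hcount : (A.card : ℝ) * (1 + Real.sqrt α)
      ≤ 2 * ((A.filter fun a => dotProduct ξ a = v).card : ℝ)) :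
    ∃ (W : Submodule (ZMod 2) (Fin n → ZMod 2)) (x : Fin n → ZMod 2)
      (A' : Finset (Fin n → ZMod 2)),
        Module.finrank (ZMod 2) W + 1 = n ∧
        (A' : Set (Fin n → ZMod 2)) ⊆ (W : Set (Fin n → ZMod 2)) ∧
        A'.image (x + ·) ⊆ A ∧
        α * (1 + Real.sqrt α / 2) ≤ (A'.card : ℝ) / Nat.card W := by
  classical
  have hn1 : 1 ≤ n := by
    rcases Nat.eq_zero_or_pos n with rfl | h
    · exact absurd (funext fun i => i.elim0) hξ
    · exact h
  set B := A.filter fun a => dotProduct ξ a = v with hB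
  refine ⟨LinearMap.ker (φ ξ), x, B.image (x + ·), finrank_ker hξ, ?_, ?_, ?_⟩
  · intro y hy
    simp only [Finset.coe_image, Set.mem_image, Finset.mem_coe] at hy
    obtain ⟨a, ha, rfl⟩ := hy
    have hav : dotProduct ξ a = v := (Finset.mem_filter.mp ha).2
    show x + a ∈ LinearMap.ker (φ ξ)
    rw [LinearMap.mem_ker]
    show dotProduct ξ (x + a) = 0
    rw [dotProduct_add, hx, hav, zmod2_add_self]
  · intro y hy
    simp only [Finset.mem_image] at hy
    obtain ⟨z, hz, rfl⟩ := hy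
    obtain ⟨a, ha, rfl⟩ := hz
    have hxx : x + x = 0 := funext fun i => zmod2_add_self _
    have : x + (x + a) = a := by rw [← add_assoc, hxx, zero_add]
    rw [this]
    exact Finset.mem_filter.mp ha |>.1
  · have hcard : (B.image (x + ·)).card = B.card :=
      Finset.card_image_of_injective _ (add_right_injective x)
    rw [hcard, card_ker hξ]
    set s := Real.sqrt α with hs
    have hs0 : 0 ≤ s := Real.sqrt_nonneg α
    have hP0 : (0:ℝ) < 2 ^ (n - 1) := by positivity
    have h2n : (2:ℝ) ^ n = 2 * 2 ^ (n - 1) := by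
      rw [← pow_succ']
      congr 1
      omega
    have hαe : α * (2 * 2 ^ (n - 1)) = (A.card : ℝ) := by
      rw [hα, h2n]
      rw [div_mul_cancel₀ _ (by positivity)]
    push_cast
    rw [le_div_iff₀ hP0]
    nlinarith [hcount, mul_nonneg hα0 hs0, mul_nonneg (mul_nonneg hα0 hs0) hP0.le]

end IterAux

open IterAux in
/-- Iteration lemma: either `A+A+A+A` is everything, or `A` has a density increment of
quality `α^{1/2}/2` on a coset of a codimension-1 subspace. -/
theorem iteration_lemma_pure_density
    (n : ℕ) (A : Finset (Fin n → ZMod 2)) (hA : A.Nonempty) (α : ℝ)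
    (hα : α = (A.card : ℝ) / 2 ^ n) :
    A + A + A + A = Finset.univ ∨
    ∃ (W : Submodule (ZMod 2) (Fin n → ZMod 2)) (x : Fin n → ZMod 2)
      (A' : Finset (Fin n → ZMod 2)),
        Module.finrank (ZMod 2) W + 1 = n ∧
        (A' : Set (Fin n → ZMod 2)) ⊆ (W : Set (Fin n → ZMod 2)) ∧
        A'.image (x + ·) ⊆ A ∧
        α * (1 + Real.sqrt α / 2) ≤ (A'.card : ℝ) / Nat.card W := by
  classical
  by_cases h4 : A + A + A + A = Finset.univ
  · exact Or.inl h4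
  right
  rw [Finset.eq_univ_iff_forall] at h4
  push_neg at h4
  obtain ⟨t, ht⟩ := h4
  have ht' : ∀ a ∈ A, ∀ b ∈ A, ∀ c ∈ A, ∀ d ∈ A, a + b + c + d ≠ t := by
    intro a ha b hb c hc d hd h
    exact ht (h ▸ Finset.add_mem_add (Finset.add_mem_add (Finset.add_mem_add ha hb) hc) hd)
  obtain ⟨ξ, hξ, hlarge⟩ := exists_large_coeff A hA t ht'
  set K : ℝ := (A.card : ℝ) with hK
  have hK0 : (0:ℝ) ≤ K := by positivity
  have hN0 : (0:ℝ) < 2 ^ n := by positivity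
  have hα0 : 0 ≤ α := by rw [hα]; positivity
  set s := Real.sqrt α with hs
  have hs0 : 0 ≤ s := Real.sqrt_nonneg α
  set P : ℝ := ((A.filter fun a => dotProduct ξ a = 0).card : ℝ) with hP
  set Q : ℝ := ((A.filter fun a => ¬ dotProduct ξ a = 0).card : ℝ) with hQ
  have hPQ : P + Q = K := by
    rw [hP, hQ, hK]
    exact_mod_cast Finset.card_filter_add_card_filter_not _
  have hcf : cf A ξ = P - Q := cf_split A ξ
  -- (K*s)^2 = K^2 * α ≤ K^3/2^n ≤ (P-Q)^2
  have hKs : K * s ≤ |P - Q| := by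
    have h1 : (K * s) ^ 2 ≤ (P - Q) ^ 2 := by
      have hsq : s ^ 2 = α := Real.sq_sqrt hα0
      have h2 : (K * s) ^ 2 = K ^ 2 * α := by rw [mul_pow, hsq]
      have h3 : K ^ 2 * α = K ^ 3 / 2 ^ n := by
        rw [hα]
        field_simp
      rw [h2, h3, ← hcf]
      exact hlarge
    calc K * s = Real.sqrt ((K * s) ^ 2) :=
          (Real.sqrt_sq (mul_nonneg hK0 hs0)).symm
      _ ≤ Real.sqrt ((P - Q) ^ 2) := Real.sqrt_le_sqrt h1
      _ = |P - Q| := Real.sqrt_sq_eq_abs _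
  rcases le_total Q P with hcase | hcase
  · -- dense on the zero coset: take x = 0, v = 0
    have habs : |P - Q| = P - Q := abs_of_nonneg (by linarith)
    rw [habs] at hKs
    refine assemble A α hα hα0 ξ hξ 0 0 (dotProduct_zero ξ) ?_
    rw [← hK, ← hP]
    nlinarith
  · -- dense on the nonzero coset
    obtain ⟨x₀, hx₀⟩ := exists_dot_one hξ
    have habs : |P - Q| = Q - P := by
      rw [abs_sub_comm]
      exact abs_of_nonneg (by linarith)
    rw [habs] at hKs
    refine assemble A α hα hα0 ξ hξ x₀ 1 hx₀ ?_
    have hfil : (A.filter fun a => dotProduct ξ a = 1)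
        = (A.filter fun a => ¬ dotProduct ξ a = 0) :=
      Finset.filter_congr fun a _ => (zmod2_ne_zero _).symm
    rw [hfil, ← hK, ← hQ]
    nlinarith
end

section
/- Let G = 𝔽₂ⁿ and A, B ⊆ G nonempty with |A+B| ≤ K|B| and |B| ≤ 2ⁿ/(2K). Then there exists a nonzero character γ of G with |χ̂_A(γ)| ≥ (2K)^(−1/2)·α, where α = |A|/2ⁿ. -/
open Finset Pointwise

/-- The Fourier transform of the indicator of `A ⊆ 𝔽₂ⁿ` at the character `γ`. -/
noncomputable def dft (n : ℕ) (A : Finset (Fin n → ZMod 2)) (γ : Fin n → ZMod 2) : ℝ :=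
  (2 ^ n : ℝ)⁻¹ * ∑ x ∈ A, (-1 : ℝ) ^ ((∑ i, γ i * x i).val)

namespace FourierAux

variable {n : ℕ}

/-- Unnormalized character value. -/
noncomputable def ee (n : ℕ) (γ x : Fin n → ZMod 2) : ℝ :=
  (-1 : ℝ) ^ ((∑ i, γ i * x i).val)

lemma neg_one_pow_val_add (a b : ZMod 2) :
    (-1 : ℝ) ^ ((a + b).val) = (-1) ^ a.val * (-1) ^ b.val := by
  rw [ZMod.val_add, ← neg_one_pow_eq_pow_mod_two, pow_add]

lemma ee_add_right (γ x y : Fin n → ZMod 2) :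
    ee n γ (x + y) = ee n γ x * ee n γ y := by
  unfold ee
  have h : (∑ i, γ i * (x + y) i) = (∑ i, γ i * x i) + (∑ i, γ i * y i) := by
    rw [← Finset.sum_add_distrib]
    exact Finset.sum_congr rfl fun i _ => by simp [mul_add]
  rw [h, neg_one_pow_val_add]

lemma ee_add_left (γ δ x : Fin n → ZMod 2) :
    ee n (γ + δ) x = ee n γ x * ee n δ x := by
  unfold ee
  have h : (∑ i, (γ + δ) i * x i) = (∑ i, γ i * x i) + (∑ i, δ i * x i) := by
    rw [← Finset.sum_add_distrib]
    exact Finset.sum_congr rfl fun i _ => by simp [add_mul]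
  rw [h, neg_one_pow_val_add]

lemma ee_zero_right (γ : Fin n → ZMod 2) : ee n γ 0 = 1 := by
  simp [ee]

lemma ee_zero_left (x : Fin n → ZMod 2) : ee n 0 x = 1 := by
  simp [ee]

lemma card_G : Fintype.card (Fin n → ZMod 2) = 2 ^ n := by
  simp

lemma sum_ee (z : Fin n → ZMod 2) :
    ∑ γ, ee n γ z = if z = 0 then (2 ^ n : ℝ) else 0 := by
  split_ifs with h
  · subst h
    simp [ee_zero_right, card_G]
  · obtain ⟨i₀, hi₀⟩ : ∃ i, z i ≠ 0 := by
      by_contra hc; push_neg at hc; exact h (funext hc)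
    have hz1 : z i₀ = 1 := by
      have h01 : ∀ a : ZMod 2, a ≠ 0 → a = 1 := by decide
      exact h01 _ hi₀
    set δ : Fin n → ZMod 2 := Pi.single i₀ 1 with hδ
    have hδz : ee n δ z = -1 := by
      unfold ee
      have hs : (∑ i, δ i * z i) = 1 := by
        rw [Finset.sum_eq_single i₀]
        · simp [hδ, hz1]
        · intro b _ hb; simp [hδ, Pi.single_eq_of_ne hb]
        · simp
      rw [hs]
      simp [ZMod.val_one]
    have key : ∑ γ, ee n γ z = ∑ γ, ee n (γ + δ) z :=
      (Fintype.sum_equiv (Equiv.addRight δ) _ _ (fun γ => rfl)).symm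
    have key2 : ∑ γ, ee n (γ + δ) z = - ∑ γ, ee n γ z := by
      simp_rw [ee_add_left, hδz, mul_neg_one]
      exact Finset.sum_neg_distrib (f := fun γ => ee n γ z)
    linarith [key, key2, key.trans key2]

lemma sum_sq_transform (h : (Fin n → ZMod 2) → ℝ) :
    ∑ γ, (∑ x, h x * ee n γ x) ^ 2 = 2 ^ n * ∑ x, (h x) ^ 2 := by
  have expand : ∀ γ, (∑ x, h x * ee n γ x) ^ 2
      = ∑ x, ∑ y, h x * h y * ee n γ (x + y) := by
    intro γ
    rw [sq, Finset.sum_mul_sum]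
    refine Finset.sum_congr rfl fun x _ => Finset.sum_congr rfl fun y _ => ?_
    rw [ee_add_right]; ring
  simp_rw [expand]
  rw [Finset.sum_comm]
  have swap2 : ∀ x, ∑ γ : Fin n → ZMod 2, ∑ y, h x * h y * ee n γ (x + y)
      = ∑ y, ∑ γ : Fin n → ZMod 2, h x * h y * ee n γ (x + y) := fun x => Finset.sum_comm
  simp_rw [swap2, ← Finset.mul_sum, sum_ee]
  have hcond : ∀ x y : Fin n → ZMod 2, (x + y = 0) ↔ (y = x) := by
    intro x y
    constructor
    · intro hxy
      have h1 := add_eq_zero_iff_eq_neg.mp hxy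
      have hneg : -y = y := funext fun i => CharTwo.neg_eq _
      rw [hneg] at h1
      exact h1.symm
    · intro hxy; subst hxy
      exact funext fun i => by simpa using CharTwo.add_self_eq_zero (y i)
  have step : ∀ x : Fin n → ZMod 2,
      (∑ y : Fin n → ZMod 2, h x * h y * if x + y = 0 then (2^n : ℝ) else 0)
      = 2 ^ n * h x ^ 2 := by
    intro x
    have : ∀ y : Fin n → ZMod 2, (h x * h y * if x + y = 0 then (2^n : ℝ) else 0)
        = if y = x then h x * h y * 2 ^ n else 0 := by
      intro y
      rw [if_congr (hcond x y) rfl rfl, mul_ite, mul_zero]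
    simp_rw [this]
    rw [Finset.sum_ite_eq' Finset.univ x (fun y => h x * h y * 2 ^ n)]
    simp [sq]; ring
  simp_rw [step]
  rw [← Finset.mul_sum]

/-- Unnormalized Fourier sum over a finset. -/
noncomputable def SS (n : ℕ) (C : Finset (Fin n → ZMod 2)) (γ : Fin n → ZMod 2) : ℝ :=
  ∑ x ∈ C, ee n γ x

lemma SS_eq_sum_indicator (C : Finset (Fin n → ZMod 2)) (γ : Fin n → ZMod 2) :
    SS n C γ = ∑ x, (if x ∈ C then (1:ℝ) else 0) * ee n γ x := by
  simp [SS, ite_mul, Finset.sum_ite_mem]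

lemma parseval_card (C : Finset (Fin n → ZMod 2)) :
    ∑ γ, (SS n C γ) ^ 2 = 2 ^ n * C.card := by
  simp_rw [SS_eq_sum_indicator]
  rw [sum_sq_transform]
  congr 1
  simp [ite_pow, Finset.sum_ite_mem]

lemma SS_zero (C : Finset (Fin n → ZMod 2)) : SS n C 0 = C.card := by
  simp [SS, ee_zero_left]

/-- number of representations of `x` as `a + b`. -/
def rep (n : ℕ) (A B : Finset (Fin n → ZMod 2)) (x : Fin n → ZMod 2) : ℕ :=
  ((A ×ˢ B).filter fun p => p.1 + p.2 = x).card

lemma SS_mul_SS (A B : Finset (Fin n → ZMod 2)) (γ : Fin n → ZMod 2) :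
    SS n A γ * SS n B γ = ∑ x, (rep n A B x : ℝ) * ee n γ x := by
  unfold SS
  rw [Finset.sum_mul_sum]
  have lhs : ∑ a ∈ A, ∑ b ∈ B, ee n γ a * ee n γ b
      = ∑ p ∈ A ×ˢ B, ee n γ (p.1 + p.2) := by
    rw [Finset.sum_product]
    exact Finset.sum_congr rfl fun a _ => Finset.sum_congr rfl fun b _ =>
      (ee_add_right γ a b).symm
  rw [lhs, ← Finset.sum_fiberwise_of_maps_to' (g := fun p : _ × _ => p.1 + p.2)
      (fun p _ => Finset.mem_univ (p.1 + p.2)) (fun x => ee n γ x)]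
  refine Finset.sum_congr rfl fun x _ => ?_
  rw [Finset.sum_const]
  simp [rep, mul_comm]

lemma sum_rep (A B : Finset (Fin n → ZMod 2)) :
    ∑ x ∈ A + B, (rep n A B x : ℝ) = A.card * B.card := by
  have := Finset.card_eq_sum_card_fiberwise
    (f := fun p : (Fin n → ZMod 2) × (Fin n → ZMod 2) => p.1 + p.2)
    (s := A ×ˢ B) (t := A + B) ?_
  · rw [← Nat.cast_mul, ← Finset.card_product, this]
    push_cast [rep]
    rfl
  · intro p hp
    obtain ⟨h1, h2⟩ := Finset.mem_product.mp hp
    exact Finset.add_mem_add h1 h2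

end FourierAux

set_option maxHeartbeats 1000000 in
open FourierAux in
/-- If `|A+B| ≤ K|B|` and `B` has density at most `1/(2K)` then the indicator of `A` has a
large nontrivial Fourier coefficient. -/
theorem exists_large_fourier_coefficient
    (n : ℕ) (A B : Finset (Fin n → ZMod 2)) (hA : A.Nonempty) (hB : B.Nonempty)
    (K : ℝ) (hK : 1 ≤ K) (hadd : ((A + B).card : ℝ) ≤ K * B.card)
    (hsmall : (B.card : ℝ) ≤ 2 ^ n / (2 * K)) :
    ∃ γ : Fin n → ZMod 2, γ ≠ 0 ∧
      (2 * K) ^ (-(1 : ℝ) / 2) * ((A.card : ℝ) / 2 ^ n) ≤ |dft n A γ| := by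
  classical
  set N : ℝ := 2 ^ n with hNdef
  have hN0 : (0:ℝ) < N := by positivity
  have hb1 : (1:ℝ) ≤ B.card := by exact_mod_cast hB.card_pos
  have ha1 : (1:ℝ) ≤ A.card := by exact_mod_cast hA.card_pos
  have hb0 : (0:ℝ) < B.card := by linarith
  have ha0 : (0:ℝ) < A.card := by linarith
  have h2K0 : (0:ℝ) < 2 * K := by linarith
  have hn : 0 < n := by
    rcases Nat.eq_zero_or_pos n with h0 | h; swap
    · exact h
    · exfalso
      subst h0
      rw [show N = 1 by norm_num [hNdef]] at hsmall
      rw [le_div_iff₀ h2K0] at hsmall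
      nlinarith
  -- pick the maximizing nonzero character
  have hEne : (Finset.univ.erase (0 : Fin n → ZMod 2)).Nonempty := by
    refine ⟨Pi.single ⟨0, hn⟩ 1, Finset.mem_erase.mpr ⟨?_, Finset.mem_univ _⟩⟩
    intro hcontra
    have := congrFun hcontra ⟨0, hn⟩
    simp at this
  obtain ⟨γ₀, hγ₀mem, hγ₀max⟩ := Finset.exists_max_image (Finset.univ.erase 0)
      (fun γ => |SS n A γ|) hEne
  obtain ⟨hγ₀ne, -⟩ := Finset.mem_erase.mp hγ₀mem
  set M := |SS n A γ₀| with hMdef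
  have hM0 : 0 ≤ M := abs_nonneg _
  refine ⟨γ₀, hγ₀ne, ?_⟩
  set r : (Fin n → ZMod 2) → ℝ := fun x => (rep n A B x : ℝ) with hr
  set Q : ℝ := ∑ x, r x ^ 2 with hQ
  set P : ℝ := ((A + B).card : ℝ) with hP
  have hP0 : 0 ≤ P := Nat.cast_nonneg _
  have hQ0 : 0 ≤ Q := Finset.sum_nonneg fun x _ => sq_nonneg _
  -- Cauchy–Schwarz
  have hCS : ((A.card : ℝ) * B.card) ^ 2 ≤ P * Q := by
    have h1 : ((A.card:ℝ) * B.card) ^ 2 = (∑ x ∈ A + B, r x) ^ 2 := by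
      rw [sum_rep]
    have h2 := sq_sum_le_card_mul_sum_sq (s := A + B) (f := r)
    have h3 : ∑ x ∈ A + B, r x ^ 2 ≤ Q :=
      Finset.sum_le_sum_of_subset_of_nonneg (Finset.subset_univ _)
        (fun x _ _ => sq_nonneg _)
    calc ((A.card:ℝ) * B.card) ^ 2 = (∑ x ∈ A + B, r x) ^ 2 := h1
      _ ≤ P * ∑ x ∈ A + B, r x ^ 2 := h2
      _ ≤ P * Q := by gcongr
  -- Parseval for the representation function
  have hPar : N * Q = ∑ γ, (SS n A γ * SS n B γ) ^ 2 := by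
    simp_rw [SS_mul_SS]
    rw [sum_sq_transform]
  -- split off the zero frequency
  set R : ℝ := ∑ γ ∈ Finset.univ.erase (0 : Fin n → ZMod 2),
      (SS n A γ * SS n B γ) ^ 2 with hRdef
  have hR0 : 0 ≤ R := Finset.sum_nonneg fun γ _ => sq_nonneg _
  have hsplit : ∑ γ, (SS n A γ * SS n B γ) ^ 2
      = ((A.card:ℝ) * B.card) ^ 2 + R := by
    rw [← Finset.add_sum_erase _ _ (Finset.mem_univ (0 : Fin n → ZMod 2)),
      SS_zero, SS_zero]
  have hrest : R ≤ M ^ 2 * (N * B.card) := by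
    calc R ≤ ∑ γ ∈ Finset.univ.erase (0 : Fin n → ZMod 2), M ^ 2 * (SS n B γ) ^ 2 := by
          refine Finset.sum_le_sum fun γ hγ => ?_
          have h4 : |SS n A γ| ≤ M := hγ₀max γ hγ
          have hx2 : (SS n A γ) ^ 2 ≤ M ^ 2 := by
            rw [← sq_abs]
            exact pow_le_pow_left₀ (abs_nonneg _) h4 2
          calc (SS n A γ * SS n B γ) ^ 2 = (SS n A γ) ^ 2 * (SS n B γ) ^ 2 := by ring
            _ ≤ M ^ 2 * (SS n B γ) ^ 2 := mul_le_mul_of_nonneg_right hx2 (sq_nonneg _)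
      _ = M ^ 2 * ∑ γ ∈ Finset.univ.erase (0 : Fin n → ZMod 2), (SS n B γ) ^ 2 :=
          (Finset.mul_sum _ _ _).symm
      _ ≤ M ^ 2 * ∑ γ, (SS n B γ) ^ 2 :=
          mul_le_mul_of_nonneg_left (Finset.sum_le_sum_of_subset_of_nonneg
            (Finset.subset_univ _) (fun γ _ _ => sq_nonneg _)) (sq_nonneg M)
      _ = M ^ 2 * (N * B.card) := by rw [parseval_card]
  -- combine everything
  have hKb : 2 * K * B.card ≤ N := by
    rw [le_div_iff₀ h2K0] at hsmall
    linarith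
  set s : ℝ := Real.sqrt (2 * K) with hs
  have hs0 : 0 < s := Real.sqrt_pos.mpr h2K0
  have hs2 : s ^ 2 = 2 * K := Real.sq_sqrt h2K0.le
  have hrpow : (2 * K) ^ (-(1:ℝ) / 2) = s⁻¹ := by
    rw [neg_div, Real.rpow_neg h2K0.le, hs, Real.sqrt_eq_rpow]
  have hdft : |dft n A γ₀| = N⁻¹ * M := by
    have h5 : dft n A γ₀ = N⁻¹ * SS n A γ₀ := rfl
    rw [h5, abs_mul, abs_of_nonneg (by positivity : (0:ℝ) ≤ N⁻¹)]
  clear_value r Q P R M s N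
  clear hr hQ hP hRdef hMdef hs hNdef hsmall hγ₀max
  have key : (A.card : ℝ) ^ 2 ≤ 2 * K * M ^ 2 := by
    have e1 : N * (((A.card:ℝ)) * B.card) ^ 2 ≤ P * (((A.card:ℝ) * B.card) ^ 2 + R) := by
      calc N * (((A.card:ℝ)) * B.card) ^ 2 ≤ N * (P * Q) :=
            mul_le_mul_of_nonneg_left hCS hN0.le
        _ = P * (N * Q) := by ring
        _ = P * (((A.card:ℝ) * B.card) ^ 2 + R) := by rw [hPar, hsplit]
    have e2 : P * (((A.card:ℝ) * B.card) ^ 2 + R)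
        ≤ K * B.card * (((A.card:ℝ) * B.card) ^ 2 + R) := by
      exact mul_le_mul_of_nonneg_right hadd (add_nonneg (sq_nonneg _) hR0)
    have e3 : K * B.card * R ≤ K * B.card * (M ^ 2 * (N * B.card)) := by
      exact mul_le_mul_of_nonneg_left hrest (mul_nonneg (by linarith) hb0.le)
    have e4 : N * (((A.card:ℝ)) * B.card) ^ 2
        ≤ K * B.card * ((A.card:ℝ) * B.card) ^ 2 + K * B.card * (M ^ 2 * (N * B.card)) := by
      linarith [e1, e2, e3]
    have e5 : K * B.card * ((A.card:ℝ) * B.card) ^ 2 ≤ N / 2 * ((A.card:ℝ) * B.card) ^ 2 :=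
      mul_le_mul_of_nonneg_right (by linarith) (sq_nonneg _)
    have e6 : N / 2 * ((A.card:ℝ) * B.card) ^ 2 ≤ K * M ^ 2 * (N * B.card ^ 2) := by
      nlinarith [e4, e5]
    have hNb2 : (0:ℝ) < N * B.card ^ 2 := by positivity
    have e7 : (N * B.card ^ 2) * ((A.card:ℝ) ^ 2 / 2) ≤ (N * B.card ^ 2) * (K * M ^ 2) := by
      nlinarith [e6]
    have e8 := le_of_mul_le_mul_left e7 hNb2
    linarith
  -- conclude
  have haM : (A.card:ℝ) ≤ s * M := by
    nlinarith [key, hs2, mul_nonneg hs0.le hM0, ha0]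
  rw [hrpow, hdft]
  calc s⁻¹ * ((A.card:ℝ) / N) = (A.card:ℝ) / (s * N) := by
        field_simp
      _ ≤ (s * M) / (s * N) :=
        (div_le_div_iff_of_pos_right (mul_pos hs0 hN0)).mpr haM
      _ = N⁻¹ * M := by
        rw [mul_div_mul_left _ _ hs0.ne']
        rw [div_eq_inv_mul]
end

section
/- Let G = 𝔽₂ⁿ and A, B ⊆ G nonempty with |A+B| ≤ K|B|, and write α = |A|/2ⁿ, β = |B|/2ⁿ. Then α²β² ≤ Kβ³α² + Kβ²·max_{γ≠0} |χ̂_A(γ)|². -/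
open Finset Pointwise

namespace TCS

noncomputable def e (n : ℕ) (γ x : Fin n → ZMod 2) : ℝ :=
  (-1 : ℝ) ^ ((∑ i, γ i * x i).val)

lemma sign_add (a b : ZMod 2) :
    (-1:ℝ) ^ ((a + b).val) = (-1:ℝ) ^ a.val * (-1:ℝ) ^ b.val := by
  rcases (by decide : ∀ a : ZMod 2, a = 0 ∨ a = 1) a with rfl | rfl <;>
  rcases (by decide : ∀ a : ZMod 2, a = 0 ∨ a = 1) b with rfl | rfl <;>
    norm_num [show ((2:ZMod 2)).val = 0 by decide, show ((1:ZMod 2)).val = 1 by decide,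
      show ((0:ZMod 2)).val = 0 by decide, show ((1 + 1 : ZMod 2)) = 0 by decide]

lemma sum_zmod2 (f : ZMod 2 → ℝ) : ∑ c : ZMod 2, f c = f 0 + f 1 := by
  rw [show (univ : Finset (ZMod 2)) = {0, 1} by decide]
  rw [Finset.sum_insert (by decide), Finset.sum_singleton]

lemma factor (a : ZMod 2) :
    ∑ c : ZMod 2, (-1:ℝ) ^ ((c * a).val) = if a = 0 then 2 else 0 := by
  rw [sum_zmod2]
  rcases (by decide : ∀ a : ZMod 2, a = 0 ∨ a = 1) a with rfl | rfl <;>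
    norm_num [show ((1:ZMod 2)).val = 1 by decide, show ((0:ZMod 2)).val = 0 by decide]

lemma sign_sum {ι : Type*} (s : Finset ι) (f : ι → ZMod 2) :
    (-1:ℝ) ^ ((∑ i ∈ s, f i).val) = ∏ i ∈ s, (-1:ℝ) ^ ((f i).val) := by
  induction s using Finset.cons_induction with
  | empty => simp [show ((0:ZMod 2)).val = 0 by decide]
  | cons a s ha ih => rw [Finset.sum_cons, Finset.prod_cons, sign_add, ih]

lemma e_add (n : ℕ) (γ x y : Fin n → ZMod 2) :
    e n γ (x + y) = e n γ x * e n γ y := by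
  unfold e
  have h : (∑ i, γ i * (x + y) i) = (∑ i, γ i * x i) + (∑ i, γ i * y i) := by
    rw [← Finset.sum_add_distrib]
    exact Finset.sum_congr rfl fun i _ => by simp [mul_add]
  rw [h, sign_add]

lemma orth (n : ℕ) (v : Fin n → ZMod 2) :
    ∑ γ : Fin n → ZMod 2, e n γ v = if v = 0 then ((2:ℝ)^n) else 0 := by
  have h1 : ∀ γ : Fin n → ZMod 2, e n γ v = ∏ i, (-1:ℝ) ^ ((γ i * v i).val) := fun γ =>
    sign_sum univ fun i => γ i * v i
  simp_rw [h1]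
  rw [← Fintype.piFinset_univ, ← Finset.prod_univ_sum (fun _ => univ)
    (fun i c => (-1:ℝ) ^ ((c * v i).val))]
  simp_rw [factor]
  by_cases h : v = 0
  · simp [h]
  · rw [if_neg h]
    obtain ⟨i, hi⟩ : ∃ i, v i ≠ 0 := by
      by_contra h'; push_neg at h'; exact h (funext h')
    exact Finset.prod_eq_zero (mem_univ i) (by simp [hi])

lemma neg_self (n : ℕ) (x : Fin n → ZMod 2) : -x = x := by
  funext i
  have : ∀ a : ZMod 2, -a = a := by decide
  simpa using this (x i)

lemma eq_iff_add_eq_zero (n : ℕ) (x y : Fin n → ZMod 2) : x + y = 0 ↔ x = y := by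
  rw [show x + y = x - y by rw [sub_eq_add_neg, neg_self], sub_eq_zero]


lemma N_dft (n : ℕ) (A : Finset (Fin n → ZMod 2)) (γ : Fin n → ZMod 2) :
    (2:ℝ)^n * dft n A γ = ∑ x ∈ A, e n γ x := by
  unfold dft e
  rw [← mul_assoc, mul_inv_cancel₀ (by positivity), one_mul]

lemma dft_zero (n : ℕ) (A : Finset (Fin n → ZMod 2)) :
    dft n A 0 = (A.card : ℝ) / 2 ^ n := by
  unfold dft
  have : ∀ x ∈ A, (-1:ℝ) ^ ((∑ i, (0 : Fin n → ZMod 2) i * x i).val) = 1 := by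
    intro x _
    simp [show ((0:ZMod 2)).val = 0 by decide]
  rw [Finset.sum_congr rfl this, Finset.sum_const, nsmul_eq_mul, mul_one, inv_mul_eq_div]

end TCS

open TCS in
/-- Splitting off the trivial character: `α²β² ≤ Kβ³α² + Kβ²·sup_{γ≠0}|χ̂_A(γ)|²`. -/
theorem trivial_character_split
    (n : ℕ) (A B : Finset (Fin n → ZMod 2)) (hA : A.Nonempty) (hB : B.Nonempty)
    (K : ℝ) (hK : 1 ≤ K) (hadd : ((A + B).card : ℝ) ≤ K * B.card)
    (α β : ℝ) (hα : α = (A.card : ℝ) / 2 ^ n) (hβ : β = (B.card : ℝ) / 2 ^ n) :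
    α ^ 2 * β ^ 2 ≤ K * β ^ 3 * α ^ 2 +
      K * β ^ 2 * ⨆ γ : {γ : Fin n → ZMod 2 // γ ≠ 0}, |dft n A γ.1| ^ 2 := by
  classical
  set N : ℝ := (2:ℝ)^n with hNdef
  have hNpos : (0:ℝ) < N := by positivity
  set S : ℝ := ⨆ γ : {γ : Fin n → ZMod 2 // γ ≠ 0}, |dft n A γ.1| ^ 2 with hSdef
  have hS0 : 0 ≤ S := Real.iSup_nonneg fun γ => by positivity
  have hSle : ∀ γ : Fin n → ZMod 2, γ ≠ 0 → (dft n A γ)^2 ≤ S := by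
    intro γ hγ
    have h := le_ciSup (f := fun γ : {γ : Fin n → ZMod 2 // γ ≠ 0} => |dft n A γ.1|^2)
      (Set.Finite.bddAbove (Set.finite_range _)) ⟨γ, hγ⟩
    calc (dft n A γ)^2 = |dft n A γ|^2 := (sq_abs _).symm
      _ ≤ S := h
  -- representation function
  set r : (Fin n → ZMod 2) → ℝ :=
    fun x => ∑ p ∈ A ×ˢ B, if p.1 + p.2 = x then (1:ℝ) else 0 with hrdef
  set E : ℝ := ∑ p ∈ A ×ˢ B, ∑ q ∈ A ×ˢ B,
      if p.1 + p.2 = q.1 + q.2 then (1:ℝ) else 0 with hEdef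
  have memAB : ∀ p ∈ A ×ˢ B, p.1 + p.2 ∈ A + B := by
    intro p hp
    rw [Finset.mem_product] at hp
    exact Finset.add_mem_add hp.1 hp.2
  have hr1 : ∑ x ∈ A + B, r x = (A.card : ℝ) * B.card := by
    rw [hrdef, Finset.sum_comm]
    have : ∀ p ∈ A ×ˢ B, (∑ x ∈ A + B, if p.1 + p.2 = x then (1:ℝ) else 0) = 1 := by
      intro p hp
      rw [Finset.sum_ite_eq, if_pos (memAB p hp)]
    rw [Finset.sum_congr rfl this, Finset.sum_const, nsmul_eq_mul, mul_one,
      Finset.card_product]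
    push_cast; ring
  have hr2 : ∑ x ∈ A + B, (r x)^2 = E := by
    rw [hrdef, hEdef]
    simp_rw [sq, Finset.sum_mul_sum]
    rw [Finset.sum_comm]
    refine Finset.sum_congr rfl fun p hp => ?_
    rw [Finset.sum_comm]
    refine Finset.sum_congr rfl fun q hq => ?_
    have : ∀ x, (if p.1 + p.2 = x then (1:ℝ) else 0) * (if q.1 + q.2 = x then (1:ℝ) else 0)
        = if p.1 + p.2 = x then (if q.1 + q.2 = x then (1:ℝ) else 0) else 0 := by
      intro x; by_cases h : p.1 + p.2 = x <;> simp [h]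
    rw [Finset.sum_congr rfl fun x _ => this x, Finset.sum_ite_eq, if_pos (memAB p hp)]
    by_cases h : p.1 + p.2 = q.1 + q.2 <;> simp [h, eq_comm]
  have hE0 : 0 ≤ E := by
    rw [hEdef]
    refine Finset.sum_nonneg fun p _ => Finset.sum_nonneg fun q _ => ?_
    positivity
  have hCS : ((A.card:ℝ) * B.card)^2 ≤ ((A+B).card : ℝ) * E := by
    have h := sq_sum_le_card_mul_sum_sq (s := A + B) (f := r)
    rwa [hr1, hr2] at h
  -- Fourier: E = N^3 * Ssum
  set Ssum : ℝ := ∑ γ : Fin n → ZMod 2, (dft n A γ)^2 * (dft n B γ)^2 with hSsumdef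
  have hF : ∀ γ, ∑ p ∈ A ×ˢ B, e n γ (p.1 + p.2) = (N * dft n A γ) * (N * dft n B γ) := by
    intro γ
    rw [N_dft, N_dft, Finset.sum_mul_sum, ← Finset.sum_product']
    exact Finset.sum_congr rfl fun p _ => e_add n γ p.1 p.2
  have parE : N^4 * Ssum = N * E := by
    have expand : ∀ γ : Fin n → ZMod 2,
        (∑ p ∈ A ×ˢ B, e n γ (p.1 + p.2))^2
          = ∑ p ∈ A ×ˢ B, ∑ q ∈ A ×ˢ B, e n γ ((p.1 + p.2) + (q.1 + q.2)) := by
      intro γ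
      rw [sq, Finset.sum_mul_sum]
      exact Finset.sum_congr rfl fun p _ => Finset.sum_congr rfl fun q _ =>
        (e_add n γ _ _).symm
    have key : ∑ γ : Fin n → ZMod 2, (∑ p ∈ A ×ˢ B, e n γ (p.1 + p.2))^2 = N * E := by
      simp_rw [expand]
      rw [Finset.sum_comm]
      have inner : ∀ p ∈ A ×ˢ B,
          (∑ γ : Fin n → ZMod 2, ∑ q ∈ A ×ˢ B, e n γ ((p.1 + p.2) + (q.1 + q.2)))
            = ∑ q ∈ A ×ˢ B, N * (if p.1 + p.2 = q.1 + q.2 then (1:ℝ) else 0) := by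
        intro p _
        rw [Finset.sum_comm]
        refine Finset.sum_congr rfl fun q _ => ?_
        rw [orth]
        simp only [eq_iff_add_eq_zero n]
        by_cases h : p.1 + p.2 = q.1 + q.2 <;> simp [h, hNdef]
      rw [Finset.sum_congr rfl inner, hEdef, Finset.mul_sum]
      exact Finset.sum_congr rfl fun p _ => (Finset.mul_sum _ _ _).symm
    calc N^4 * Ssum = ∑ γ : Fin n → ZMod 2, (N * dft n A γ)^2 * (N * dft n B γ)^2 := by
          rw [hSsumdef, Finset.mul_sum]; exact Finset.sum_congr rfl fun γ _ => by ring
      _ = ∑ γ : Fin n → ZMod 2, (∑ p ∈ A ×ˢ B, e n γ (p.1 + p.2))^2 := by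
          exact Finset.sum_congr rfl fun γ _ => by rw [hF γ]; ring
      _ = N * E := key
  -- Parseval for B
  have parB : ∑ γ : Fin n → ZMod 2, (dft n B γ)^2 = (B.card : ℝ) / N := by
    have key : ∑ γ : Fin n → ZMod 2, (N * dft n B γ)^2 = N * B.card := by
      have expand : ∀ γ : Fin n → ZMod 2, (N * dft n B γ)^2
          = ∑ b ∈ B, ∑ b' ∈ B, e n γ (b + b') := by
        intro γ
        rw [N_dft, sq, Finset.sum_mul_sum]
        exact Finset.sum_congr rfl fun b _ => Finset.sum_congr rfl fun b' _ =>
          (e_add n γ _ _).symm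
      simp_rw [expand]
      rw [Finset.sum_comm]
      have inner : ∀ b ∈ B,
          (∑ γ : Fin n → ZMod 2, ∑ b' ∈ B, e n γ (b + b')) = N := by
        intro b hb
        rw [Finset.sum_comm]
        have : ∀ b' ∈ B, (∑ γ : Fin n → ZMod 2, e n γ (b + b'))
            = if b = b' then N else 0 := by
          intro b' _
          rw [orth]
          simp only [eq_iff_add_eq_zero n]
          rw [hNdef]
        rw [Finset.sum_congr rfl this, Finset.sum_ite_eq, if_pos hb]
      rw [Finset.sum_congr rfl inner, Finset.sum_const, nsmul_eq_mul]
      ring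
    have h2 : N^2 * ∑ γ : Fin n → ZMod 2, (dft n B γ)^2 = N * B.card := by
      rw [← key, Finset.mul_sum]
      exact Finset.sum_congr rfl fun γ _ => by ring
    have h3 : N * ((∑ γ : Fin n → ZMod 2, (dft n B γ)^2) * N) = N * (B.card : ℝ) := by
      rw [← h2]; ring
    have h4 := mul_left_cancel₀ (ne_of_gt hNpos) h3
    rw [eq_div_iff (ne_of_gt hNpos)]
    exact h4
  -- split off γ = 0
  have hsplit : Ssum ≤ α^2 * β^2 + S * (β) := by
    rw [hSsumdef, ← Finset.add_sum_erase _ _ (Finset.mem_univ (0 : Fin n → ZMod 2))]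
    have h0 : (dft n A 0)^2 * (dft n B 0)^2 = α^2 * β^2 := by
      rw [dft_zero, dft_zero, hα, hβ]
    rw [h0]
    have hrest : ∑ γ ∈ (univ : Finset (Fin n → ZMod 2)).erase 0,
        (dft n A γ)^2 * (dft n B γ)^2 ≤ S * β := by
      calc ∑ γ ∈ (univ : Finset (Fin n → ZMod 2)).erase 0, (dft n A γ)^2 * (dft n B γ)^2
          ≤ ∑ γ ∈ (univ : Finset (Fin n → ZMod 2)).erase 0, S * (dft n B γ)^2 := by
            refine Finset.sum_le_sum fun γ hγ => ?_
            exact mul_le_mul_of_nonneg_right (hSle γ (Finset.mem_erase.1 hγ).1) (sq_nonneg _)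
        _ = S * ∑ γ ∈ (univ : Finset (Fin n → ZMod 2)).erase 0, (dft n B γ)^2 := by
            rw [Finset.mul_sum]
        _ ≤ S * ∑ γ : Fin n → ZMod 2, (dft n B γ)^2 := by
            refine mul_le_mul_of_nonneg_left ?_ hS0
            exact Finset.sum_le_sum_of_subset_of_nonneg (Finset.subset_univ _)
              (fun γ _ _ => sq_nonneg _)
        _ = S * ((B.card : ℝ) / N) := by rw [parB]
        _ = S * β := by rw [hβ, hNdef]
    linarith
  -- cardinalities in terms of α β
  have hAcard : (A.card : ℝ) = α * N := by rw [hα, hNdef]; field_simp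
  have hBcard : (B.card : ℝ) = β * N := by rw [hβ]; exact (div_mul_cancel₀ _ hNpos.ne').symm
  have hβ0 : 0 ≤ β := by rw [hβ]; exact div_nonneg (Nat.cast_nonneg _) hNpos.le
  -- combine
  have hEval : E = N^3 * Ssum := by
    have h3 : N * (N^3 * Ssum) = N * E := by rw [← parE]; ring
    exact (mul_left_cancel₀ (ne_of_gt hNpos) h3).symm
  have chain : (α * N * (β * N))^2 ≤ K * (β * N) * (N^3 * Ssum) := by
    calc (α * N * (β * N))^2 = ((A.card:ℝ) * B.card)^2 := by rw [hAcard, hBcard]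
      _ ≤ ((A+B).card : ℝ) * E := hCS
      _ ≤ (K * B.card) * E := mul_le_mul_of_nonneg_right hadd hE0
      _ = K * (β * N) * (N^3 * Ssum) := by rw [hBcard, hEval]
  have hK0 : (0:ℝ) ≤ K := le_trans zero_le_one hK
  have chain2 : (α * N * (β * N))^2 ≤ K * (β * N) * (N^3 * (α^2 * β^2 + S * β)) := by
    refine le_trans chain ?_
    have hKβN : 0 ≤ K * (β * N) * N^3 :=
      mul_nonneg (mul_nonneg hK0 (mul_nonneg hβ0 hNpos.le)) (by positivity)
    have h5 := mul_le_mul_of_nonneg_left hsplit hKβN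
    have e3 : K * (β * N) * (N^3 * Ssum) = K * (β * N) * N^3 * Ssum := by ring
    have e4 : K * (β * N) * (N^3 * (α^2 * β^2 + S * β))
        = K * (β * N) * N^3 * (α^2 * β^2 + S * β) := by ring
    linarith
  have e1 : (α * N * (β * N))^2 = (α^2 * β^2) * N^4 := by ring
  have e2 : K * (β * N) * (N^3 * (α^2 * β^2 + S * β))
      = (K * β^3 * α^2 + K * β^2 * S) * N^4 := by ring
  have final : (α^2 * β^2) * N^4 ≤ (K * β^3 * α^2 + K * β^2 * S) * N^4 := by linarith
  have hfin := le_of_mul_le_mul_right final (by positivity : (0:ℝ) < N^4)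
  linarith
end

section
/- Let G = 𝔽₂ⁿ and A, B ⊆ G nonempty with |A+B| ≤ K|B|. Let α = |A|/2ⁿ. Then at least one of the following holds: (i) B+B+B+B contains a subspace of codimension at most C·K^(1/2) for an absolute constant C; or (ii) there exist a codimension-1 subspace W ≤ G, elements x,y ∈ G, and sets A', B' ⊆ W such that x+A' ⊆ A, y+B' ⊆ B, |A'|/|W| ≥ α(1 + 2^(−3/2)K^(−1/2)), and |A'+B'| ≤ K|B'|. -/
open Finset Pointwise Module
set_option linter.unusedSectionVars false

section Fourier
variable {G : Type*} [AddCommGroup G] [Module (ZMod 2) G] [Fintype G] [DecidableEq G]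

lemma G_add_self (g : G) : g + g = 0 := by
  have h := two_smul (ZMod 2) g
  have h2 : (2 : ZMod 2) = 0 := by decide
  rw [h2, zero_smul] at h; exact h.symm

lemma G_add_eq_zero {a b : G} : a + b = 0 ↔ a = b := by
  constructor
  · intro h
    have : a + (b + b) = (a + b) + b := (add_assoc a b b).symm
    rw [G_add_self, h, add_zero, zero_add] at this; exact this
  · rintro rfl; exact G_add_self a

noncomputable instance : Fintype (Module.Dual (ZMod 2) G) :=
  Fintype.ofInjective (DFunLike.coe) DFunLike.coe_injective

lemma card_dual : Fintype.card (Module.Dual (ZMod 2) G) = Fintype.card G := by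
  rw [card_eq_pow_finrank (K := ZMod 2) (V := Module.Dual (ZMod 2) G),
    card_eq_pow_finrank (K := ZMod 2) (V := G), Subspace.dual_finrank_eq]

noncomputable def chi (φ : Module.Dual (ZMod 2) G) (x : G) : ℝ :=
  if φ x = 0 then 1 else -1

lemma chi_add_right (φ : Module.Dual (ZMod 2) G) (x y : G) :
    chi φ (x + y) = chi φ x * chi φ y := by
  unfold chi
  rw [map_add]
  rcases (by decide : ∀ c : ZMod 2, c = 0 ∨ c = 1) (φ x) with hx | hx <;>
    rcases (by decide : ∀ c : ZMod 2, c = 0 ∨ c = 1) (φ y) with hy | hy <;>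
      simp [hx, hy, show (1:ZMod 2)+1 = 0 from by decide]

lemma chi_add_left (φ ψ : Module.Dual (ZMod 2) G) (x : G) :
    chi (φ + ψ) x = chi φ x * chi ψ x := by
  unfold chi
  rw [LinearMap.add_apply]
  rcases (by decide : ∀ c : ZMod 2, c = 0 ∨ c = 1) (φ x) with hx | hx <;>
    rcases (by decide : ∀ c : ZMod 2, c = 0 ∨ c = 1) (ψ x) with hy | hy <;>
      simp [hx, hy, show (1:ZMod 2)+1 = 0 from by decide]

lemma sum_chi (z : G) :
    ∑ φ : Module.Dual (ZMod 2) G, chi φ z =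
      if z = 0 then (Fintype.card G : ℝ) else 0 := by
  by_cases hz : z = 0
  · simp [hz, chi, ← card_dual (G := G)]
  · simp only [hz, if_false]
    obtain ⟨φ₀, hφ₀⟩ : ∃ φ₀ : Module.Dual (ZMod 2) G, φ₀ z ≠ 0 := by
      by_contra h
      push_neg at h
      exact hz ((Module.forall_dual_apply_eq_zero_iff (ZMod 2) z).mp h)
    have key : ∑ φ : Module.Dual (ZMod 2) G, chi φ z =
        ∑ φ : Module.Dual (ZMod 2) G, chi (φ + φ₀) z :=
      (Fintype.sum_equiv (Equiv.addRight φ₀) _ _ (fun φ => rfl)).symm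
    have h2 : ∀ φ : Module.Dual (ZMod 2) G, chi (φ + φ₀) z = - chi φ z := by
      intro φ
      rw [chi_add_left]
      have : chi φ₀ z = -1 := by simp [chi, hφ₀]
      rw [this]; ring
    simp only [h2, Finset.sum_neg_distrib] at key
    linarith

noncomputable def fhat (S : Finset G) (φ : Module.Dual (ZMod 2) G) : ℝ :=
  ∑ x ∈ S, chi φ x

lemma fhat_zero (S : Finset G) : fhat S 0 = S.card := by
  simp [fhat, chi]

lemma mul_fhat (S T : Finset G) (φ : Module.Dual (ZMod 2) G) :
    fhat S φ * fhat T φ = ∑ p ∈ S ×ˢ T, chi φ (p.1 + p.2) := by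
  rw [fhat, fhat, Finset.sum_mul_sum, Finset.sum_product]
  exact Finset.sum_congr rfl fun a _ => Finset.sum_congr rfl fun b _ =>
    (chi_add_right φ a b).symm

/-- Parseval. -/
lemma sum_fhat_sq (B : Finset G) :
    ∑ φ : Module.Dual (ZMod 2) G, (fhat B φ)^2 = (Fintype.card G : ℝ) * B.card := by
  have h1 : ∀ φ : Module.Dual (ZMod 2) G,
      (fhat B φ)^2 = ∑ p ∈ B ×ˢ B, chi φ (p.1 + p.2) := fun φ => by
    rw [sq]; exact mul_fhat B B φ
  rw [Finset.sum_congr rfl fun φ _ => h1 φ, Finset.sum_comm]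
  have h2 : ∀ p ∈ B ×ˢ B, (∑ φ : Module.Dual (ZMod 2) G, chi φ (p.1 + p.2)) =
      if p.1 = p.2 then (Fintype.card G : ℝ) else 0 := fun p _ => by
    rw [sum_chi]; exact if_congr G_add_eq_zero rfl rfl
  rw [Finset.sum_congr rfl h2, Finset.sum_product]
  have h3 : ∀ a ∈ B, (∑ b ∈ B, if a = b then (Fintype.card G : ℝ) else 0)
      = (Fintype.card G : ℝ) := fun a ha => by
    rw [Finset.sum_ite_eq]; simp [ha]
  rw [Finset.sum_congr rfl h3, Finset.sum_const, nsmul_eq_mul, mul_comm]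
end Fourier
section Fourier2
variable {G : Type*} [AddCommGroup G] [Module (ZMod 2) G] [Fintype G] [DecidableEq G]

lemma expand2 {ι κ : Type*} (s : Finset ι) (t : Finset κ) (f : ι → G) (g : κ → G)
    (φ : Module.Dual (ZMod 2) G) :
    (∑ i ∈ s, chi φ (f i)) * (∑ j ∈ t, chi φ (g j))
      = ∑ q ∈ s ×ˢ t, chi φ (f q.1 + g q.2) := by
  rw [Finset.sum_mul_sum, Finset.sum_product]
  exact Finset.sum_congr rfl fun a _ => Finset.sum_congr rfl fun b _ =>
    (chi_add_right φ _ _).symm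

/-- additive energy count -/
def E4 (A B : Finset G) : ℕ :=
  (((A ×ˢ B) ×ˢ (A ×ˢ B)).filter
    (fun q => q.1.1 + q.1.2 = q.2.1 + q.2.2)).card

lemma sum_fhat_energy (A B : Finset G) :
    ∑ φ : Module.Dual (ZMod 2) G, (fhat A φ * fhat B φ)^2
      = (Fintype.card G : ℝ) * E4 A B := by
  have h1 : ∀ φ : Module.Dual (ZMod 2) G,
      (fhat A φ * fhat B φ)^2
        = ∑ q ∈ (A ×ˢ B) ×ˢ (A ×ˢ B), chi φ ((q.1.1 + q.1.2) + (q.2.1 + q.2.2)) := by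
    intro φ
    rw [sq, mul_fhat, expand2]
  rw [Finset.sum_congr rfl fun φ _ => h1 φ, Finset.sum_comm]
  have h2 : ∀ q ∈ (A ×ˢ B) ×ˢ (A ×ˢ B),
      (∑ φ : Module.Dual (ZMod 2) G, chi φ ((q.1.1 + q.1.2) + (q.2.1 + q.2.2)))
        = if q.1.1 + q.1.2 = q.2.1 + q.2.2 then (Fintype.card G : ℝ) else 0 := fun q _ => by
    rw [sum_chi]; exact if_congr G_add_eq_zero rfl rfl
  rw [Finset.sum_congr rfl h2, Finset.sum_ite, Finset.sum_const, Finset.sum_const,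
    smul_zero, add_zero, nsmul_eq_mul, mul_comm]
  rfl

/-- number of representations of `x` as a sum of four elements of `B` -/
def r4 (B : Finset G) (x : G) : ℕ :=
  (((B ×ˢ B) ×ˢ (B ×ˢ B)).filter
    (fun q => (q.1.1 + q.1.2) + (q.2.1 + q.2.2) = x)).card

lemma sum_fhat_four (B : Finset G) (x : G) :
    ∑ φ : Module.Dual (ZMod 2) G, (fhat B φ)^4 * chi φ x
      = (Fintype.card G : ℝ) * r4 B x := by
  have h1 : ∀ φ : Module.Dual (ZMod 2) G,
      (fhat B φ)^4 * chi φ x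
        = ∑ q ∈ (B ×ˢ B) ×ˢ (B ×ˢ B), chi φ (((q.1.1 + q.1.2) + (q.2.1 + q.2.2)) + x) := by
    intro φ
    have h4 : (fhat B φ)^4
        = ∑ q ∈ (B ×ˢ B) ×ˢ (B ×ˢ B), chi φ ((q.1.1 + q.1.2) + (q.2.1 + q.2.2)) := by
      have : (fhat B φ)^4 = (fhat B φ * fhat B φ) * (fhat B φ * fhat B φ) := by ring
      rw [this, mul_fhat, expand2]
    rw [h4, Finset.sum_mul]
    exact Finset.sum_congr rfl fun q _ => (chi_add_right φ _ _).symm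
  rw [Finset.sum_congr rfl fun φ _ => h1 φ, Finset.sum_comm]
  have h2 : ∀ q ∈ (B ×ˢ B) ×ˢ (B ×ˢ B),
      (∑ φ : Module.Dual (ZMod 2) G, chi φ (((q.1.1 + q.1.2) + (q.2.1 + q.2.2)) + x))
        = if (q.1.1 + q.1.2) + (q.2.1 + q.2.2) = x then (Fintype.card G : ℝ) else 0 :=
    fun q _ => by rw [sum_chi]; exact if_congr G_add_eq_zero rfl rfl
  rw [Finset.sum_congr rfl h2, Finset.sum_ite, Finset.sum_const, Finset.sum_const,
    smul_zero, add_zero, nsmul_eq_mul, mul_comm]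
  rfl
end Fourier2
section Comb
variable {G : Type*} [AddCommGroup G] [Module (ZMod 2) G] [Fintype G] [DecidableEq G]

lemma mem_fourfold_of_r4_pos {B : Finset G} {x : G} (h : 0 < r4 B x) :
    x ∈ B + B + B + B := by
  rw [r4, Finset.card_pos] at h
  obtain ⟨q, hq⟩ := h
  rw [Finset.mem_filter, Finset.mem_product, Finset.mem_product, Finset.mem_product] at hq
  obtain ⟨⟨⟨h1, h2⟩, h3, h4⟩, hsum⟩ := hq
  have : x = q.1.1 + q.1.2 + q.2.1 + q.2.2 := by rw [← hsum]; abel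
  rw [this]
  exact Finset.add_mem_add (Finset.add_mem_add (Finset.add_mem_add h1 h2) h3) h4

lemma energy_lower (A B : Finset G) :
    ((A.card : ℝ) * B.card)^2 ≤ ((A + B).card : ℝ) * E4 A B := by
  classical
  set r : G → ℕ := fun s => ((A ×ˢ B).filter (fun p => p.1 + p.2 = s)).card with hr
  have hmaps : ∀ p ∈ A ×ˢ B, p.1 + p.2 ∈ A + B := by
    intro p hp
    rw [Finset.mem_product] at hp
    exact Finset.add_mem_add hp.1 hp.2
  have hsum1 : ∑ s ∈ A + B, (r s : ℝ) = (A.card : ℝ) * B.card := by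
    have := Finset.card_eq_sum_card_fiberwise hmaps
    rw [Finset.card_product] at this
    rw [hr]
    rw [← Nat.cast_sum]
    exact_mod_cast this.symm
  have hsum2 : ∑ s ∈ A + B, ((r s : ℝ))^2 = (E4 A B : ℝ) := by
    have hmaps2 : ∀ q ∈ ((A ×ˢ B) ×ˢ (A ×ˢ B)).filter
        (fun q => q.1.1 + q.1.2 = q.2.1 + q.2.2), q.1.1 + q.1.2 ∈ A + B := by
      intro q hq
      rw [Finset.mem_filter, Finset.mem_product] at hq
      exact hmaps q.1 hq.1.1
    have key := Finset.card_eq_sum_card_fiberwise hmaps2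
    have hfib : ∀ s ∈ A + B,
        ((((A ×ˢ B) ×ˢ (A ×ˢ B)).filter (fun q => q.1.1 + q.1.2 = q.2.1 + q.2.2)).filter
          (fun q => q.1.1 + q.1.2 = s)).card = r s * r s := by
      intro s _
      have : (((A ×ˢ B) ×ˢ (A ×ˢ B)).filter (fun q => q.1.1 + q.1.2 = q.2.1 + q.2.2)).filter
            (fun q => q.1.1 + q.1.2 = s)
          = ((A ×ˢ B).filter (fun p => p.1 + p.2 = s)) ×ˢ
            ((A ×ˢ B).filter (fun p => p.1 + p.2 = s)) := by
        ext q
        simp only [Finset.mem_filter, Finset.mem_product]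
        constructor
        · rintro ⟨⟨⟨hq1, hq2⟩, he⟩, hs⟩
          exact ⟨⟨hq1, hs⟩, hq2, he ▸ hs⟩
        · rintro ⟨⟨hq1, hs1⟩, hq2, hs2⟩
          exact ⟨⟨⟨hq1, hq2⟩, hs1.trans hs2.symm⟩, hs1⟩
      rw [this, Finset.card_product]
    rw [E4, key, Finset.sum_congr rfl hfib]
    push_cast
    exact Finset.sum_congr rfl fun s _ => (sq ((r s : ℝ)))
  calc ((A.card : ℝ) * B.card)^2 = (∑ s ∈ A + B, (r s : ℝ))^2 := by rw [hsum1]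
    _ ≤ ((A + B).card : ℝ) * ∑ s ∈ A + B, ((r s : ℝ))^2 := by
        exact_mod_cast sq_sum_le_card_mul_sum_sq
    _ = ((A + B).card : ℝ) * E4 A B := by rw [hsum2]

lemma fhat_eq_counts (S : Finset G) (φ : Module.Dual (ZMod 2) G) :
    fhat S φ = ((S.filter (fun a => φ a = 0)).card : ℝ)
      - ((S.filter (fun a => ¬ φ a = 0)).card : ℝ) := by
  rw [fhat]
  unfold chi
  rw [Finset.sum_ite, Finset.sum_const, Finset.sum_const]
  simp [nsmul_eq_mul]
  ring

lemma counts_split (S : Finset G) (φ : Module.Dual (ZMod 2) G) :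
    (S.filter (fun a => φ a = 0)).card + (S.filter (fun a => ¬ φ a = 0)).card = S.card :=
  Finset.card_filter_add_card_filter_not _

end Comb
section Numeric

lemma numeric_step {g b b' : ℝ} (hb : 0 < b) (hbg : b ≤ g) (hb'pos : 0 < b')
    (hb' : b + Real.sqrt (b^3 / g) ≤ 2 * b') :
    1 + 4 * Real.sqrt ((g / 2) / b') ≤ 4 * Real.sqrt (g / b) := by
  have hg : 0 < g := lt_of_lt_of_le hb hbg
  set x : ℝ := Real.sqrt (b / g) with hxdef
  have hx0 : 0 < x := Real.sqrt_pos.mpr (div_pos hb hg)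
  have hx1 : x ≤ 1 := by
    rw [hxdef, show (1:ℝ) = Real.sqrt 1 from (Real.sqrt_one).symm]
    exact Real.sqrt_le_sqrt (by rw [div_le_one hg]; exact hbg)
  have hgb : Real.sqrt (g / b) = 1 / x := by
    have h : g / b = (b / g)⁻¹ := by field_simp
    rw [hxdef, h, Real.sqrt_inv, one_div]
  have hb3 : Real.sqrt (b^3 / g) = b * x := by
    rw [hxdef, show b^3 / g = b^2 * (b / g) by ring, Real.sqrt_mul (sq_nonneg b),
      Real.sqrt_sq hb.le]
  have hx14 : (0:ℝ) < 1 - x / 4 := by linarith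
  have key : Real.sqrt ((g / 2) / b') ≤ (1 / x) * (1 - x / 4) := by
    have h1 : (g / 2) / b' ≤ (g / b) / (1 + x) := by
      rw [div_le_div_iff₀ hb'pos (by linarith : (0:ℝ) < 1 + x)]
      have hbx : b * (1 + x) ≤ 2 * b' := by rw [hb3] at hb'; linarith [hb']
      calc g / 2 * (1 + x) = g * ((1 + x) / 2) := by ring
        _ ≤ g / b * b' := by
            rw [div_mul_eq_mul_div, le_div_iff₀ hb] at *
            nlinarith
    have h2 : Real.sqrt ((g / b) / (1 + x)) ≤ (1 / x) * (1 - x / 4) := by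
      rw [div_eq_mul_one_div (g/b) (1+x), Real.sqrt_mul (by positivity : (0:ℝ) ≤ g / b), hgb]
      have h3 : Real.sqrt (1 / (1 + x)) ≤ 1 - x / 4 := by
        rw [show (1:ℝ) - x/4 = Real.sqrt ((1 - x/4)^2) from
          (Real.sqrt_sq hx14.le).symm]
        apply Real.sqrt_le_sqrt
        rw [div_le_iff₀ (by linarith : (0:ℝ) < 1 + x)]
        nlinarith [mul_nonneg hx0.le (sub_nonneg.mpr hx1), hx0.le, pow_nonneg hx0.le 3]
      have := mul_le_mul_of_nonneg_left h3 (by positivity : (0:ℝ) ≤ 1 / x)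
      linarith
    exact le_trans (Real.sqrt_le_sqrt h1) h2
  have : 1 + 4 * ((1 / x) * (1 - x / 4)) = 4 * (1 / x) := by
    field_simp
    ring
  rw [hgb]
  nlinarith [key]

end Numeric
section Bog

lemma chi_zero_dual {G : Type*} [AddCommGroup G] [Module (ZMod 2) G] (x : G) :
    chi (0 : Module.Dual (ZMod 2) G) x = 1 := by simp [chi]

lemma zmod2_self_add (c : ZMod 2) : c + c = 0 := by revert c; decide

theorem bog_aux : ∀ (N : ℕ) (G : Type) [AddCommGroup G] [Module (ZMod 2) G]
    [Fintype G] [DecidableEq G], Fintype.card G ≤ N → ∀ B : Finset G, B.Nonempty →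
    ∃ V : Submodule (ZMod 2) G, (V : Set G) ⊆ (↑(B + B + B + B) : Set G) ∧
      ((Module.finrank (ZMod 2) G : ℝ) - Module.finrank (ZMod 2) V)
        ≤ 4 * Real.sqrt ((Fintype.card G : ℝ) / B.card) := by
  intro N
  induction N with
  | zero =>
    intro G _ _ _ _ hc
    have : 0 < Fintype.card G := Fintype.card_pos_iff.mpr ⟨0⟩
    omega
  | succ N ih =>
    intro G _ _ _ _ hcard B hB
    have hbpos : (0:ℝ) < B.card := by exact_mod_cast Finset.card_pos.mpr hB
    have hgpos : (0:ℝ) < Fintype.card G := by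
      exact_mod_cast Fintype.card_pos_iff.mpr ⟨(0:G)⟩
    have hbg : (B.card : ℝ) ≤ Fintype.card G := by
      exact_mod_cast Finset.card_le_univ B
    set t2 : ℝ := (B.card : ℝ)^3 / Fintype.card G with ht2def
    have ht2pos : 0 < t2 := by positivity
    by_cases huni : ∃ φ : Module.Dual (ZMod 2) G, φ ≠ 0 ∧ Real.sqrt t2 ≤ |fhat B φ|
    · -- increment case
      obtain ⟨φ, hφ0, hφ⟩ := huni
      set c0 := (B.filter (fun a => φ a = 0)).card with hc0
      set c1 := (B.filter (fun a => ¬ φ a = 0)).card with hc1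
      have hc01 : c0 + c1 = B.card := counts_split B φ
      have hfhat : fhat B φ = (c0:ℝ) - c1 := fhat_eq_counts B φ
      obtain ⟨Bi, hBiB, ⟨c, hc⟩, hBi2⟩ :
          ∃ Bi : Finset G, Bi ⊆ B ∧ (∃ c : ZMod 2, ∀ a ∈ Bi, φ a = c) ∧
            (B.card : ℝ) + Real.sqrt t2 ≤ 2 * Bi.card := by
        rcases le_or_gt ((c1:ℝ)) c0 with hside | hside
        · refine ⟨B.filter (fun a => φ a = 0), Finset.filter_subset _ _,
            ⟨0, fun a ha => (Finset.mem_filter.mp ha).2⟩, ?_⟩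
          have habs : |fhat B φ| = (c0:ℝ) - c1 := by
            rw [hfhat, abs_of_nonneg (by linarith)]
          rw [habs] at hφ
          have : (c0:ℝ) + c1 = B.card := by exact_mod_cast hc01
          push_cast
          linarith
        · refine ⟨B.filter (fun a => ¬ φ a = 0), Finset.filter_subset _ _,
            ⟨1, fun a ha => ?_⟩, ?_⟩
          · have := (Finset.mem_filter.mp ha).2
            rcases (by decide : ∀ c : ZMod 2, c = 0 ∨ c = 1) (φ a) with h | h
            · exact absurd h this
            · exact h
          · have habs : |fhat B φ| = (c1:ℝ) - c0 := by
              rw [hfhat, abs_of_nonpos (by linarith)]; ring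
            rw [habs] at hφ
            have : (c0:ℝ) + c1 = B.card := by exact_mod_cast hc01
            push_cast
            linarith
      have hBipos : (0:ℝ) < Bi.card := by
        have := Real.sqrt_nonneg t2
        linarith
      have hBine : Bi.Nonempty := Finset.card_pos.mp (by exact_mod_cast hBipos)
      obtain ⟨y, hy⟩ := hBine
      set W := LinearMap.ker φ with hWdef
      letI : DecidablePred (fun x : G => x ∈ W) := Classical.decPred _
      have hsurj : Function.Surjective φ := by
        obtain ⟨x0, hx0⟩ : ∃ x, φ x ≠ 0 := by
          by_contra h
          push_neg at h
          exact hφ0 (LinearMap.ext fun x => h x)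
        have hx1 : φ x0 = 1 := by
          rcases (by decide : ∀ c : ZMod 2, c = 0 ∨ c = 1) (φ x0) with h | h
          · exact absurd h hx0
          · exact h
        intro d
        rcases (by decide : ∀ c : ZMod 2, c = 0 ∨ c = 1) d with rfl | rfl
        · exact ⟨0, map_zero φ⟩
        · exact ⟨x0, hx1⟩
      have hrank : Module.finrank (ZMod 2) W + 1 = Module.finrank (ZMod 2) G := by
        have h := LinearMap.finrank_range_add_finrank_ker φ
        rw [LinearMap.range_eq_top.mpr hsurj, finrank_top, finrank_self, ← hWdef] at h
        omega
      have hcardW : 2 * Fintype.card ↥W = Fintype.card G := by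
        rw [card_eq_pow_finrank (K := ZMod 2) (V := ↥W),
          card_eq_pow_finrank (K := ZMod 2) (V := G), ZMod.card, ← hrank, pow_succ]
        ring
      set Bc := Bi.image (fun a => y + a) with hBcdef
      have hBc_card : Bc.card = Bi.card :=
        Finset.card_image_of_injective _ (add_right_injective y)
      have hBcW : ∀ z ∈ Bc, z ∈ W := by
        intro z hz
        obtain ⟨a, ha, rfl⟩ := Finset.mem_image.mp hz
        rw [LinearMap.mem_ker, map_add, hc y hy, hc a ha, zmod2_self_add]
      set B' : Finset ↥W := Bc.subtype (fun x => x ∈ W) with hB'def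
      have hB'c : B'.card = Bi.card := by
        rw [hB'def, Finset.card_subtype, Finset.filter_true_of_mem hBcW, hBc_card]
      have hB'ne : B'.Nonempty := by
        rw [← Finset.card_pos, hB'c]
        exact_mod_cast hBipos
      have hWlt : Fintype.card ↥W ≤ N := by
        by_contra hlt
        push_neg at hlt
        have h2 : 2 * (N + 1) ≤ 2 * Fintype.card ↥W := by omega
        rw [hcardW] at h2
        omega
      obtain ⟨V', hV'sub, hV'rank⟩ := ih ↥W hWlt B' hB'ne
      refine ⟨V'.map W.subtype, ?_, ?_⟩
      · rintro x ⟨w, hwV', rfl⟩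
        have hw4 : w ∈ B' + B' + B' + B' := hV'sub hwV'
        obtain ⟨u3, hu3, v4, hv4, rfl⟩ := Finset.mem_add.mp hw4
        obtain ⟨u2, hu2, v3, hv3, rfl⟩ := Finset.mem_add.mp hu3
        obtain ⟨v1, hv1, v2, hv2, rfl⟩ := Finset.mem_add.mp hu2
        have hmem : ∀ v : ↥W, v ∈ B' → ∃ a ∈ Bi, (v:G) = y + a := by
          intro v hv
          have : (v:G) ∈ Bc := Finset.mem_subtype.mp hv
          obtain ⟨a, ha, hae⟩ := Finset.mem_image.mp this
          exact ⟨a, ha, hae.symm⟩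
        obtain ⟨a1, ha1, he1⟩ := hmem v1 hv1
        obtain ⟨a2, ha2, he2⟩ := hmem v2 hv2
        obtain ⟨a3, ha3, he3⟩ := hmem v3 hv3
        obtain ⟨a4, ha4, he4⟩ := hmem v4 hv4
        have hcoe : ((W.subtype) (v1 + v2 + v3 + v4) : G)
            = ((a1 + a2) + a3) + a4 := by
          have : ((W.subtype) (v1 + v2 + v3 + v4) : G)
              = (y + a1) + (y + a2) + (y + a3) + (y + a4) := by
            rw [map_add, map_add, map_add]
            simp only [Submodule.coe_subtype] at *
            rw [he1, he2, he3, he4]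
          rw [this]
          have h2 : (y + a1) + (y + a2) + (y + a3) + (y + a4)
              = (y + y) + ((y + y) + (((a1 + a2) + a3) + a4)) := by abel
          rw [h2, G_add_self, zero_add, zero_add]
        rw [hcoe]
        exact Finset.mem_coe.mpr
          (Finset.add_mem_add (Finset.add_mem_add (Finset.add_mem_add
            (hBiB ha1) (hBiB ha2)) (hBiB ha3)) (hBiB ha4))
      · rw [Submodule.finrank_map_subtype_eq]
        have harith : (Module.finrank (ZMod 2) G : ℝ) - Module.finrank (ZMod 2) V'
            = 1 + ((Module.finrank (ZMod 2) ↥W : ℝ) - Module.finrank (ZMod 2) V') := by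
          rw [← hrank]; push_cast; ring
        rw [harith]
        have hgW : (Fintype.card ↥W : ℝ) = (Fintype.card G : ℝ) / 2 := by
          rw [← hcardW]; push_cast; ring
        have hstep := numeric_step (g := (Fintype.card G : ℝ)) (b := (B.card : ℝ))
          (b' := (B'.card : ℝ)) hbpos hbg (by rw [hB'c]; exact_mod_cast hBipos)
          (by rw [hB'c, ← ht2def]; exact hBi2)
        rw [hgW] at hV'rank
        linarith
    · -- uniform case
      push_neg at huni
      refine ⟨⊤, ?_, ?_⟩
      · intro x _
        have hpar := sum_fhat_sq B
        have hfour := sum_fhat_four B x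
        have hzero : fhat B (0 : Module.Dual (ZMod 2) G) = (B.card : ℝ) := fhat_zero B
        have herase4 := Finset.sum_erase_add Finset.univ
          (fun φ => (fhat B φ)^4 * chi φ x) (Finset.mem_univ (0 : Module.Dual (ZMod 2) G))
        have herase2 := Finset.sum_erase_add Finset.univ
          (fun φ => (fhat B φ)^2) (Finset.mem_univ (0 : Module.Dual (ZMod 2) G))
        have hbound : ∀ φ ∈ Finset.univ.erase (0 : Module.Dual (ZMod 2) G),
            -(t2 * (fhat B φ)^2) ≤ (fhat B φ)^4 * chi φ x := by
          intro φ hφ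
          have hne : φ ≠ 0 := (Finset.mem_erase.mp hφ).1
          have habs := huni φ hne
          have hf2 : (fhat B φ)^2 ≤ t2 := by
            have h1 : (fhat B φ)^2 = |fhat B φ|^2 := (sq_abs _).symm
            have h2 : |fhat B φ|^2 ≤ Real.sqrt t2 ^ 2 :=
              pow_le_pow_left₀ (abs_nonneg _) habs.le 2
            rw [Real.sq_sqrt ht2pos.le] at h2
            rw [h1]; exact h2
          have hchi : -1 ≤ chi φ x := by unfold chi; split <;> norm_num
          have hf4 : (0:ℝ) ≤ (fhat B φ)^4 := by positivity
          nlinarith [sq_nonneg (fhat B φ)]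
        have hsum4 := Finset.sum_le_sum hbound
        have hz2 : (fhat B (0 : Module.Dual (ZMod 2) G))^2 = (B.card:ℝ)^2 := by
          rw [hzero]
        have hS2 : ∑ φ ∈ Finset.univ.erase (0 : Module.Dual (ZMod 2) G), (fhat B φ)^2
            = (Fintype.card G : ℝ) * B.card - (B.card:ℝ)^2 := by
          rw [hpar] at herase2
          linarith [herase2, hz2]
        have hneg : ∑ φ ∈ Finset.univ.erase (0 : Module.Dual (ZMod 2) G),
            -(t2 * (fhat B φ)^2)
            = -(t2 * ((Fintype.card G : ℝ) * B.card - (B.card:ℝ)^2)) := by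
          rw [Finset.sum_neg_distrib, ← Finset.mul_sum, hS2]
        have h0term : (fhat B (0 : Module.Dual (ZMod 2) G))^4 * chi (0 : Module.Dual (ZMod 2) G) x
            = (B.card:ℝ)^4 := by
          rw [hzero, chi_zero_dual, mul_one]
        have halg : (B.card:ℝ)^4 - t2 * ((Fintype.card G:ℝ) * B.card - (B.card:ℝ)^2)
            = (B.card:ℝ)^5 / Fintype.card G := by
          rw [ht2def]; field_simp; ring
        have hsum_eq : (Fintype.card G : ℝ) * r4 B x
            = (∑ φ ∈ Finset.univ.erase (0 : Module.Dual (ZMod 2) G), (fhat B φ)^4 * chi φ x)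
              + (B.card:ℝ)^4 := by
          rw [← hfour, ← herase4, h0term]
        have hfinal : (B.card:ℝ)^5 / Fintype.card G ≤ (Fintype.card G : ℝ) * r4 B x := by
          rw [hneg] at hsum4
          linarith
        have hb5 : (0:ℝ) < (B.card:ℝ)^5 / Fintype.card G := by positivity
        have hr4R : (0:ℝ) < (r4 B x : ℝ) := by nlinarith
        have hpos : 0 < r4 B x := by exact_mod_cast hr4R
        exact Finset.mem_coe.mpr (mem_fourfold_of_r4_pos hpos)
      · rw [finrank_top, sub_self]
        positivity

end Bog
set_option maxHeartbeats 1000000 in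
/-- Iteration lemma with doubling: if `|A+B| ≤ K|B|` then either `B+B+B+B` contains a
subspace of codimension `O(K^{1/2})`, or `A` has a density increment of quality
`2^{-3/2}K^{-1/2}` on a codimension-1 subspace, compatibly with `B`. -/
theorem iteration_lemma_doubling :
    ∃ C : ℝ, 0 < C ∧
      ∀ (n : ℕ) (A B : Finset (Fin n → ZMod 2)) (K : ℝ), A.Nonempty → B.Nonempty →
        1 ≤ K → ((A + B).card : ℝ) ≤ K * B.card →
        (∃ V : Submodule (ZMod 2) (Fin n → ZMod 2),
            (V : Set (Fin n → ZMod 2)) ⊆ (↑(B + B + B + B) : Set (Fin n → ZMod 2)) ∧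
            ((n : ℝ) - Module.finrank (ZMod 2) V) ≤ C * K ^ ((1 : ℝ) / 2)) ∨
        (∃ (W : Submodule (ZMod 2) (Fin n → ZMod 2)) (x y : Fin n → ZMod 2)
            (A' B' : Finset (Fin n → ZMod 2)),
            Module.finrank (ZMod 2) W + 1 = n ∧
            (A' : Set (Fin n → ZMod 2)) ⊆ (W : Set (Fin n → ZMod 2)) ∧
            (B' : Set (Fin n → ZMod 2)) ⊆ (W : Set (Fin n → ZMod 2)) ∧
            A'.image (x + ·) ⊆ A ∧ B'.image (y + ·) ⊆ B ∧
            ((A.card : ℝ) / 2 ^ n) * (1 + 2 ^ (-(3 : ℝ) / 2) * K ^ (-(1 : ℝ) / 2)) ≤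
              (A'.card : ℝ) / Nat.card W ∧
            ((A' + B').card : ℝ) ≤ K * B'.card) := by
  refine ⟨5, by norm_num, ?_⟩
  intro n A B K hA hB hK hAB
  have hK0 : (0:ℝ) < K := lt_of_lt_of_le one_pos hK
  have hapos : (0:ℝ) < A.card := by exact_mod_cast Finset.card_pos.mpr hA
  have hbpos : (0:ℝ) < B.card := by exact_mod_cast Finset.card_pos.mpr hB
  have hfr : Module.finrank (ZMod 2) (Fin n → ZMod 2) = n := Module.finrank_fin_fun (ZMod 2)
  have hcardG : Fintype.card (Fin n → ZMod 2) = 2 ^ n := by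
    rw [card_eq_pow_finrank (K := ZMod 2) (V := (Fin n → ZMod 2)), ZMod.card, hfr]
  have hgpos : (0:ℝ) < Fintype.card (Fin n → ZMod 2) := by
    rw [hcardG]; positivity
  set ε : ℝ := (2:ℝ) ^ (-(3:ℝ)/2) * K ^ (-(1:ℝ)/2) with hεdef
  have hεpos : 0 < ε := by
    have h1 : (0:ℝ) < (2:ℝ) ^ (-(3:ℝ)/2) := Real.rpow_pos_of_pos (by norm_num) _
    have h2 : (0:ℝ) < K ^ (-(1:ℝ)/2) := Real.rpow_pos_of_pos hK0 _
    exact mul_pos h1 h2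
  have hε2 : ε ^ 2 = 1 / (8 * K) := by
    have h1 : ((2:ℝ) ^ (-(3:ℝ)/2)) ^ 2 = 1/8 := by
      rw [← Real.rpow_natCast ((2:ℝ) ^ (-(3:ℝ)/2)) 2,
        ← Real.rpow_mul (by norm_num : (0:ℝ) ≤ 2),
        show (-(3:ℝ)/2 * (2:ℕ)) = ((-3 : ℤ) : ℝ) by push_cast; ring,
        Real.rpow_intCast]
      norm_num
    have h2 : (K ^ (-(1:ℝ)/2)) ^ 2 = K⁻¹ := by
      rw [← Real.rpow_natCast (K ^ (-(1:ℝ)/2)) 2, ← Real.rpow_mul hK0.le,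
        show (-(1:ℝ)/2 * (2:ℕ)) = -1 by push_cast; ring, Real.rpow_neg_one]
    rw [hεdef, mul_pow, h1, h2]
    field_simp
  by_cases hcase : ∃ φ : Module.Dual (ZMod 2) (Fin n → ZMod 2), φ ≠ 0 ∧ ε * A.card ≤ |fhat A φ|
  · -- density increment case
    right
    obtain ⟨φ, hφ0, hφA⟩ := hcase
    set W := LinearMap.ker φ with hWdef
    have hsurj : Function.Surjective φ := by
      obtain ⟨x0, hx0⟩ : ∃ x, φ x ≠ 0 := by
        by_contra h
        push_neg at h
        exact hφ0 (LinearMap.ext fun x => h x)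
      have hx1 : φ x0 = 1 := by
        rcases (by decide : ∀ c : ZMod 2, c = 0 ∨ c = 1) (φ x0) with h | h
        · exact absurd h hx0
        · exact h
      intro d
      rcases (by decide : ∀ c : ZMod 2, c = 0 ∨ c = 1) d with rfl | rfl
      · exact ⟨0, map_zero φ⟩
      · exact ⟨x0, hx1⟩
    have hrank : Module.finrank (ZMod 2) W + 1 = n := by
      have h := LinearMap.finrank_range_add_finrank_ker φ
      rw [LinearMap.range_eq_top.mpr hsurj, finrank_top, finrank_self, ← hWdef, hfr] at h
      omega
    -- select the A side
    obtain ⟨Ai, hAiA, ⟨cA, hcA⟩, hAi2⟩ :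
        ∃ Ai : Finset (Fin n → ZMod 2), Ai ⊆ A ∧ (∃ c : ZMod 2, ∀ a ∈ Ai, φ a = c) ∧
          (A.card : ℝ) + ε * A.card ≤ 2 * Ai.card := by
      set c0 := (A.filter (fun a => φ a = 0)).card with hc0
      set c1 := (A.filter (fun a => ¬ φ a = 0)).card with hc1
      have hc01 : c0 + c1 = A.card := counts_split A φ
      have hfhat : fhat A φ = (c0:ℝ) - c1 := fhat_eq_counts A φ
      have hcast : (c0:ℝ) + c1 = A.card := by exact_mod_cast hc01
      rcases le_or_gt ((c1:ℝ)) c0 with hside | hside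
      · refine ⟨A.filter (fun a => φ a = 0), Finset.filter_subset _ _,
          ⟨0, fun a ha => (Finset.mem_filter.mp ha).2⟩, ?_⟩
        have habs : |fhat A φ| = (c0:ℝ) - c1 := by
          rw [hfhat, abs_of_nonneg (by linarith)]
        rw [habs] at hφA
        push_cast
        linarith
      · refine ⟨A.filter (fun a => ¬ φ a = 0), Finset.filter_subset _ _,
          ⟨1, fun a ha => ?_⟩, ?_⟩
        · have := (Finset.mem_filter.mp ha).2
          rcases (by decide : ∀ c : ZMod 2, c = 0 ∨ c = 1) (φ a) with h | h
          · exact absurd h this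
          · exact h
        · have habs : |fhat A φ| = (c1:ℝ) - c0 := by
            rw [hfhat, abs_of_nonpos (by linarith)]; ring
          rw [habs] at hφA
          push_cast
          linarith
    have hAipos : (0:ℝ) < Ai.card := by nlinarith
    have hAine : Ai.Nonempty := Finset.card_pos.mp (by exact_mod_cast hAipos)
    obtain ⟨x, hx⟩ := hAine
    -- select the B side
    obtain ⟨Bj, hBjB, ⟨cB, hcB⟩, hBjgood⟩ :
        ∃ Bj : Finset (Fin n → ZMod 2), Bj ⊆ B ∧ (∃ c : ZMod 2, ∀ b ∈ Bj, φ b = c) ∧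
          ((Ai + Bj).card : ℝ) ≤ K * Bj.card := by
      set B0 := B.filter (fun b => φ b = 0) with hB0
      set B1 := B.filter (fun b => ¬ φ b = 0) with hB1
      have hB01 : B0.card + B1.card = B.card := counts_split B φ
      have hgood : ((Ai + B0).card : ℝ) ≤ K * B0.card ∨
          ((Ai + B1).card : ℝ) ≤ K * B1.card := by
        by_contra h
        push_neg at h
        obtain ⟨h0, h1⟩ := h
        have hsub0 : Ai + B0 ⊆ A + B :=
          Finset.add_subset_add hAiA (Finset.filter_subset _ _)
        have hsub1 : Ai + B1 ⊆ A + B :=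
          Finset.add_subset_add hAiA (Finset.filter_subset _ _)
        have hdisj : Disjoint (Ai + B0) (Ai + B1) := by
          rw [Finset.disjoint_left]
          intro z hz0 hz1
          obtain ⟨a, ha, b, hb, hab⟩ := Finset.mem_add.mp hz0
          obtain ⟨a', ha', b', hb', hab'⟩ := Finset.mem_add.mp hz1
          have e0 : φ z = cA := by
            rw [← hab, map_add, hcA a ha, (Finset.mem_filter.mp hb).2, add_zero]
          have e1 : φ z = cA + 1 := by
            have hb'1 : φ b' = 1 := by
              have := (Finset.mem_filter.mp hb').2
              rcases (by decide : ∀ c : ZMod 2, c = 0 ∨ c = 1) (φ b') with h | h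
              · exact absurd h this
              · exact h
            rw [← hab', map_add, hcA a' ha', hb'1]
          rw [e0] at e1
          exact absurd e1 ((by decide : ∀ c : ZMod 2, ¬ c = c + 1) cA)
        have hunion : (Ai + B0).card + (Ai + B1).card ≤ (A + B).card := by
          rw [← Finset.card_union_of_disjoint hdisj]
          exact Finset.card_le_card (Finset.union_subset hsub0 hsub1)
        have hcast : ((Ai + B0).card : ℝ) + (Ai + B1).card ≤ ((A + B).card : ℝ) := by
          exact_mod_cast hunion
        have hBcast : (B0.card : ℝ) + B1.card = B.card := by exact_mod_cast hB01
        have hx1 : K * (B.card:ℝ) = K * B0.card + K * B1.card := by rw [← hBcast]; ring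
        linarith
      rcases hgood with h | h
      · exact ⟨B0, Finset.filter_subset _ _,
          ⟨0, fun b hb => (Finset.mem_filter.mp hb).2⟩, h⟩
      · refine ⟨B1, Finset.filter_subset _ _, ⟨1, fun b hb => ?_⟩, h⟩
        have := (Finset.mem_filter.mp hb).2
        rcases (by decide : ∀ c : ZMod 2, c = 0 ∨ c = 1) (φ b) with hh | hh
        · exact absurd hh this
        · exact hh
    obtain ⟨y, hyW⟩ : ∃ y : (Fin n → ZMod 2), ∀ b ∈ Bj, φ (y + b) = 0 := by
      rcases Finset.eq_empty_or_nonempty Bj with h | ⟨y, hy⟩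
      · exact ⟨0, fun b hb => by rw [h] at hb; exact absurd hb (Finset.notMem_empty b)⟩
      · exact ⟨y, fun b hb => by rw [map_add, hcB y hy, hcB b hb, zmod2_self_add]⟩
    set A' := Ai.image (fun a => x + a) with hA'def
    set B' := Bj.image (fun b => y + b) with hB'def
    have hA'card : A'.card = Ai.card :=
      Finset.card_image_of_injective _ (add_right_injective x)
    have hB'card : B'.card = Bj.card :=
      Finset.card_image_of_injective _ (add_right_injective y)
    refine ⟨W, x, y, A', B', hrank, ?_, ?_, ?_, ?_, ?_, ?_⟩
    · intro z hz
      obtain ⟨a, ha, rfl⟩ := Finset.mem_image.mp (Finset.mem_coe.mp hz)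
      show x + a ∈ W
      rw [hWdef, LinearMap.mem_ker, map_add, hcA x hx, hcA a ha, zmod2_self_add]
    · intro z hz
      obtain ⟨b, hb, rfl⟩ := Finset.mem_image.mp (Finset.mem_coe.mp hz)
      show y + b ∈ W
      rw [hWdef, LinearMap.mem_ker]
      exact hyW b hb
    · intro z hz
      obtain ⟨w, hw, rfl⟩ := Finset.mem_image.mp hz
      obtain ⟨a, ha, rfl⟩ := Finset.mem_image.mp hw
      have : x + (x + a) = a := by rw [← add_assoc, G_add_self, zero_add]
      rw [this]
      exact hAiA ha
    · intro z hz
      obtain ⟨w, hw, rfl⟩ := Finset.mem_image.mp hz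
      obtain ⟨b, hb, rfl⟩ := Finset.mem_image.mp hw
      have : y + (y + b) = b := by rw [← add_assoc, G_add_self, zero_add]
      rw [this]
      exact hBjB hb
    · -- density increment
      letI : DecidablePred (fun z : (Fin n → ZMod 2) => z ∈ W) := Classical.decPred _
      have hNW : (Nat.card ↥W : ℝ) * 2 = 2 ^ n := by
        rw [Nat.card_eq_fintype_card, card_eq_pow_finrank (K := ZMod 2) (V := ↥W), ZMod.card]
        push_cast
        rw [← pow_succ, hrank]
      have hmpos : (0:ℝ) < Nat.card ↥W := by nlinarith [pow_pos (by norm_num : (0:ℝ) < 2) n]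
      rw [div_mul_eq_mul_div, div_le_div_iff₀ (by positivity) hmpos]
      rw [hA'card]
      have h2n : (2:ℝ) ^ n = (Nat.card ↥W : ℝ) * 2 := hNW.symm
      rw [h2n]
      nlinarith
    · -- doubling retained
      have hsum : A' + B' = (Ai + Bj).image (fun z => (x + y) + z) := by
        ext z
        simp only [hA'def, hB'def, Finset.mem_image, Finset.mem_add]
        constructor
        · rintro ⟨u, ⟨a, ha, rfl⟩, v, ⟨b, hb, rfl⟩, rfl⟩
          exact ⟨a + b, ⟨a, ha, b, hb, rfl⟩, by abel⟩
        · rintro ⟨w, ⟨a, ha, b, hb, rfl⟩, rfl⟩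
          exact ⟨x + a, ⟨a, ha, rfl⟩, y + b, ⟨b, hb, rfl⟩, by abel⟩
      have hcardsum : (A' + B').card = (Ai + Bj).card := by
        rw [hsum]
        exact Finset.card_image_of_injective _ (add_right_injective (x + y))
      rw [hcardsum, hB'card]
      exact hBjgood
  · -- uniform case
    left
    push_neg at hcase
    have hEident := sum_fhat_energy A B
    have herase := Finset.sum_erase_add Finset.univ
      (fun φ => (fhat A φ * fhat B φ)^2) (Finset.mem_univ (0 : Module.Dual (ZMod 2) (Fin n → ZMod 2)))
    have hzeroA : fhat A (0 : Module.Dual (ZMod 2) (Fin n → ZMod 2)) = (A.card : ℝ) := fhat_zero A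
    have hzeroB : fhat B (0 : Module.Dual (ZMod 2) (Fin n → ZMod 2)) = (B.card : ℝ) := fhat_zero B
    have hparB := sum_fhat_sq B
    have hbound : ∀ φ ∈ Finset.univ.erase (0 : Module.Dual (ZMod 2) (Fin n → ZMod 2)),
        (fhat A φ * fhat B φ)^2 ≤ (ε * A.card)^2 * (fhat B φ)^2 := by
      intro φ hφ
      have hne : φ ≠ 0 := (Finset.mem_erase.mp hφ).1
      have habs := hcase φ hne
      have h1 : (fhat A φ)^2 ≤ (ε * A.card)^2 := by
        have := sq_abs (fhat A φ)
        nlinarith [abs_nonneg (fhat A φ), mul_pos hεpos hapos]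
      have h2 : (0:ℝ) ≤ (fhat B φ)^2 := sq_nonneg _
      calc (fhat A φ * fhat B φ)^2 = (fhat A φ)^2 * (fhat B φ)^2 := by ring
        _ ≤ (ε * A.card)^2 * (fhat B φ)^2 := by nlinarith
    have hsumB : ∑ φ ∈ Finset.univ.erase (0 : Module.Dual (ZMod 2) (Fin n → ZMod 2)), (fhat B φ)^2
        ≤ (Fintype.card (Fin n → ZMod 2) : ℝ) * B.card := by
      rw [← hparB]
      exact Finset.sum_le_sum_of_subset_of_nonneg (Finset.subset_univ _)
        (fun i _ _ => sq_nonneg _)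
    have hupper : (Fintype.card (Fin n → ZMod 2) : ℝ) * E4 A B
        ≤ (A.card : ℝ)^2 * B.card^2 + (ε * A.card)^2 * ((Fintype.card (Fin n → ZMod 2) : ℝ) * B.card) := by
      rw [← hEident, ← herase, hzeroA, hzeroB]
      have hle := Finset.sum_le_sum hbound
      have hle2 : ∑ φ ∈ Finset.univ.erase (0 : Module.Dual (ZMod 2) (Fin n → ZMod 2)),
          (ε * A.card)^2 * (fhat B φ)^2 ≤ (ε * A.card)^2 * ((Fintype.card (Fin n → ZMod 2) : ℝ) * B.card) := by
        rw [← Finset.mul_sum]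
        exact mul_le_mul_of_nonneg_left hsumB (sq_nonneg _)
      nlinarith
    have hlower : (A.card : ℝ)^2 * B.card ≤ K * E4 A B := by
      have h1 := energy_lower A B
      have hE4 : (0:ℝ) ≤ (E4 A B : ℝ) := Nat.cast_nonneg _
      have h2 : ((A + B).card : ℝ) * E4 A B ≤ K * B.card * E4 A B :=
        mul_le_mul_of_nonneg_right hAB hE4
      have h3 : ((A.card : ℝ) * B.card)^2 ≤ K * B.card * E4 A B := le_trans h1 h2
      nlinarith
    -- conclude density of B
    have hKε : K * ε^2 = 1/8 := by
      rw [hε2]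
      field_simp
    have hbK : 7 * (Fintype.card (Fin n → ZMod 2) : ℝ) ≤ 8 * K * B.card := by
      set g : ℝ := (Fintype.card (Fin n → ZMod 2) : ℝ) with hgdef
      set a : ℝ := (A.card : ℝ) with hadef
      set b : ℝ := (B.card : ℝ) with hbdef
      have hKe : K * (ε * a)^2 = (1/8) * a^2 := by
        calc K * (ε * a)^2 = (K * ε^2) * a^2 := by ring
          _ = (1/8) * a^2 := by rw [hKε]
      have hstep : g * (a^2 * b) ≤ K * (a^2 * b^2 + (ε * a)^2 * (g * b)) := by
        calc g * (a^2 * b) ≤ g * (K * E4 A B) := by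
              exact mul_le_mul_of_nonneg_left hlower hgpos.le
          _ = K * (g * E4 A B) := by ring
          _ ≤ K * (a^2 * b^2 + (ε * a)^2 * (g * b)) :=
              mul_le_mul_of_nonneg_left hupper hK0.le
      have h6 : K * ((ε * a)^2 * (g * b)) = (1/8) * a^2 * (g * b) := by
        calc K * ((ε * a)^2 * (g * b)) = (K * (ε * a)^2) * (g * b) := by ring
          _ = ((1/8) * a^2) * (g * b) := by rw [hKe]
          _ = (1/8) * a^2 * (g * b) := by ring
      have hexpand : K * (a^2 * b^2 + (ε * a)^2 * (g * b))
          = K * (a^2 * b^2) + K * ((ε * a)^2 * (g * b)) := by ring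
      have hfin : g * (a^2 * b) ≤ K * (a^2 * b^2) + (1/8) * a^2 * (g * b) := by
        linarith [hstep, hexpand, h6]
      have ha2b : (0:ℝ) < a^2 * b := by positivity
      have hdiv : g ≤ K * b + g / 8 := by
        rw [← mul_le_mul_iff_right₀ ha2b]
        nlinarith [hfin]
      linarith
    obtain ⟨V, hVsub, hVrank⟩ := bog_aux (Fintype.card (Fin n → ZMod 2)) (Fin n → ZMod 2) le_rfl B hB
    refine ⟨V, hVsub, ?_⟩
    have h1 : (Fintype.card (Fin n → ZMod 2) : ℝ) / B.card ≤ 8 * K / 7 := by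
      rw [div_le_div_iff₀ hbpos (by norm_num)]
      linarith
    have h2 : Real.sqrt ((Fintype.card (Fin n → ZMod 2) : ℝ) / B.card) ≤ Real.sqrt (8 * K / 7) :=
      Real.sqrt_le_sqrt h1
    have h3 : Real.sqrt (8 * K / 7) = Real.sqrt (8/7) * Real.sqrt K := by
      rw [← Real.sqrt_mul (by norm_num : (0:ℝ) ≤ 8/7)]
      congr 1
      ring
    have h4 : Real.sqrt (8/7) ≤ 5/4 := by
      rw [show (5:ℝ)/4 = Real.sqrt ((5/4)^2) from (Real.sqrt_sq (by norm_num)).symm]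
      exact Real.sqrt_le_sqrt (by norm_num)
    have h5 : K ^ ((1:ℝ)/2) = Real.sqrt K := (Real.sqrt_eq_rpow K).symm
    have hsqK : (0:ℝ) ≤ Real.sqrt K := Real.sqrt_nonneg K
    rw [h5]
    have hn : (n : ℝ) = (Module.finrank (ZMod 2) (Fin n → ZMod 2) : ℝ) := by rw [hfr]
    rw [hn]
    calc (Module.finrank (ZMod 2) (Fin n → ZMod 2) : ℝ) - Module.finrank (ZMod 2) V
        ≤ 4 * Real.sqrt ((Fintype.card (Fin n → ZMod 2) : ℝ) / B.card) := hVrank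
      _ ≤ 4 * (Real.sqrt (8/7) * Real.sqrt K) := by rw [← h3]; linarith
      _ ≤ 5 * Real.sqrt K := by nlinarith
end

section
/- Let G = 𝔽₂ⁿ and A ⊆ G nonempty of density α with A+A+A+A ≠ G. Then there exists a nonzero γ ∈ Ĝ with |χ̂_A(γ)| ≥ α^(3/2). -/
open Finset Pointwise

namespace FourAux

noncomputable def F (a : ZMod 2) : ℝ := (-1 : ℝ) ^ a.val

lemma F_add (a b : ZMod 2) : F (a + b) = F a * F b := by
  unfold F
  rw [ZMod.val_add, ← neg_one_pow_eq_pow_mod_two, pow_add]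

lemma F_zero : F 0 = 1 := by simp [F]

lemma F_abs (a : ZMod 2) : |F a| = 1 := by
  fin_cases a <;> simp [F]

noncomputable def e (n : ℕ) (γ x : Fin n → ZMod 2) : ℝ := F (∑ i, γ i * x i)

lemma e_abs (n : ℕ) (γ x : Fin n → ZMod 2) : |e n γ x| = 1 := F_abs _

lemma dft_eq (n : ℕ) (A : Finset (Fin n → ZMod 2)) (γ : Fin n → ZMod 2) :
    dft n A γ = (2 ^ n : ℝ)⁻¹ * ∑ x ∈ A, e n γ x := rfl

lemma e_add (n : ℕ) (γ x y : Fin n → ZMod 2) : e n γ (x + y) = e n γ x * e n γ y := by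
  unfold e
  rw [← F_add]
  congr 1
  rw [← Finset.sum_add_distrib]
  exact Finset.sum_congr rfl fun i _ => by simp [mul_add]

lemma e_zero_right (n : ℕ) (γ : Fin n → ZMod 2) : e n γ 0 = 1 := by
  simp [e, F_zero]

lemma e_zero_left (n : ℕ) (x : Fin n → ZMod 2) : e n 0 x = 1 := by
  simp [e, F_zero]

lemma F_sum {ι : Type*} (s : Finset ι) (f : ι → ZMod 2) :
    F (∑ i ∈ s, f i) = ∏ i ∈ s, F (f i) := by
  induction s using Finset.cons_induction with
  | empty => simp [F_zero]
  | cons a s ha ih => simp [Finset.sum_cons, Finset.prod_cons, F_add, ih]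

lemma zmod2_cases (a : ZMod 2) : a = 0 ∨ a = 1 := by revert a; decide

lemma univ_zmod2 : (Finset.univ : Finset (ZMod 2)) = {0, 1} := by decide

lemma zmod2_add_eq_zero (a b : ZMod 2) : a + b = 0 ↔ a = b := by revert a b; decide

lemma add_eq_zero_iff {n : ℕ} (x y : Fin n → ZMod 2) : x + y = 0 ↔ x = y := by
  simp only [funext_iff, Pi.add_apply, Pi.zero_apply]
  exact forall_congr' fun i => zmod2_add_eq_zero _ _

lemma sum_e (n : ℕ) (x : Fin n → ZMod 2) :
    ∑ γ : Fin n → ZMod 2, e n γ x = if x = 0 then (2 : ℝ) ^ n else 0 := by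
  have h1 : ∀ γ : Fin n → ZMod 2, e n γ x = ∏ i, F (γ i * x i) := fun γ => F_sum _ _
  have h2 : ∑ γ : Fin n → ZMod 2, e n γ x = ∏ i, ∑ g : ZMod 2, F (g * x i) := by
    rw [Finset.prod_univ_sum, Fintype.piFinset_univ]
    exact Finset.sum_congr rfl fun γ _ => h1 γ
  rw [h2]
  by_cases hx : x = 0
  · rw [if_pos hx]
    have : ∀ i, ∑ g : ZMod 2, F (g * x i) = 2 := by
      intro i
      rw [univ_zmod2, Finset.sum_pair (by decide), hx]
      simp [F_zero]
      norm_num [F]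
    rw [Finset.prod_congr rfl fun i _ => this i, Finset.prod_const]
    simp
  · rw [if_neg hx]
    obtain ⟨i, hi⟩ : ∃ i, x i ≠ 0 := by
      by_contra hc; push_neg at hc; exact hx (funext hc)
    have hxi : x i = 1 := (zmod2_cases (x i)).resolve_left hi
    refine Finset.prod_eq_zero (Finset.mem_univ i) ?_
    rw [univ_zmod2, Finset.sum_pair (by decide), hxi]
    norm_num [F, ZMod.val_one, ZMod.val_zero]

lemma parseval (n : ℕ) (A : Finset (Fin n → ZMod 2)) :
    ∑ γ : Fin n → ZMod 2, (dft n A γ) ^ 2 = (A.card : ℝ) / 2 ^ n := by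
  have hpow : (0:ℝ) < 2 ^ n := by positivity
  have key : ∀ γ : Fin n → ZMod 2,
      (dft n A γ) ^ 2 = ((2 ^ n : ℝ)⁻¹) ^ 2 * ∑ x ∈ A, ∑ y ∈ A, e n γ (x + y) := by
    intro γ
    rw [dft_eq, mul_pow, pow_two (∑ x ∈ A, e n γ x), Finset.sum_mul_sum]
    congr 1
    exact Finset.sum_congr rfl fun x _ => Finset.sum_congr rfl fun y _ => (e_add n γ x y).symm
  calc ∑ γ : Fin n → ZMod 2, (dft n A γ) ^ 2
      = ((2 ^ n : ℝ)⁻¹) ^ 2 * ∑ γ : Fin n → ZMod 2, ∑ x ∈ A, ∑ y ∈ A, e n γ (x + y) := by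
        rw [Finset.mul_sum]; exact Finset.sum_congr rfl fun γ _ => key γ
    _ = ((2 ^ n : ℝ)⁻¹) ^ 2 * ∑ x ∈ A, ∑ y ∈ A, ∑ γ : Fin n → ZMod 2, e n γ (x + y) := by
        rw [Finset.sum_comm]
        congr 1
        exact Finset.sum_congr rfl fun x _ => Finset.sum_comm
    _ = ((2 ^ n : ℝ)⁻¹) ^ 2 * ∑ x ∈ A, ∑ y ∈ A, (if y = x then (2:ℝ)^n else 0) := by
        congr 1
        refine Finset.sum_congr rfl fun x hx => Finset.sum_congr rfl fun y hy => ?_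
        rw [sum_e]
        congr 1
        simp only [add_eq_zero_iff, eq_iff_iff]
        exact ⟨fun h => h.symm, fun h => h.symm⟩
    _ = ((2 ^ n : ℝ)⁻¹) ^ 2 * ∑ x ∈ A, (if x ∈ A then (2:ℝ)^n else 0) := by
        congr 1
        exact Finset.sum_congr rfl fun x hx => Finset.sum_ite_eq' A x fun _ => (2:ℝ)^n
    _ = (A.card : ℝ) / 2 ^ n := by
        rw [Finset.sum_congr rfl fun x hx => if_pos hx, Finset.sum_const, nsmul_eq_mul]
        field_simp

lemma swap5 {M : Type*} [AddCommMonoid M] {X Y : Type*} (T : Finset Y) (s : Finset X)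
    (f : Y → X → X → X → X → M) :
    (∑ γ ∈ T, ∑ a ∈ s, ∑ b ∈ s, ∑ c ∈ s, ∑ d ∈ s, f γ a b c d)
      = ∑ a ∈ s, ∑ b ∈ s, ∑ c ∈ s, ∑ d ∈ s, ∑ γ ∈ T, f γ a b c d := by
  rw [Finset.sum_comm]
  refine Finset.sum_congr rfl fun a _ => ?_
  rw [Finset.sum_comm]
  refine Finset.sum_congr rfl fun b _ => ?_
  rw [Finset.sum_comm]
  refine Finset.sum_congr rfl fun c _ => ?_
  rw [Finset.sum_comm]

set_option maxHeartbeats 1000000 in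
lemma fourfold (n : ℕ) (A : Finset (Fin n → ZMod 2)) (t : Fin n → ZMod 2)
    (ht : t ∉ A + A + A + A) :
    ∑ γ : Fin n → ZMod 2, (dft n A γ) ^ 4 * e n γ t = 0 := by
  have key : ∀ γ : Fin n → ZMod 2,
      (dft n A γ) ^ 4 * e n γ t
        = ((2 ^ n : ℝ)⁻¹) ^ 4 *
            ∑ a ∈ A, ∑ b ∈ A, ∑ c ∈ A, ∑ d ∈ A, e n γ (a + b + c + d + t) := by
    intro γ
    rw [dft_eq, mul_pow]
    rw [mul_assoc]
    congr 1
    have expand : (∑ x ∈ A, e n γ x) ^ 4 * e n γ t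
        = ((∑ a ∈ A, e n γ a) * (∑ b ∈ A, e n γ b) * (∑ c ∈ A, e n γ c) *
            (∑ d ∈ A, e n γ d)) * e n γ t := by ring
    rw [expand]
    simp only [Finset.sum_mul, Finset.mul_sum]
    refine Finset.sum_congr rfl fun a _ => Finset.sum_congr rfl fun b _ =>
      Finset.sum_congr rfl fun c _ => Finset.sum_congr rfl fun d _ => ?_
    simp only [e_add]
    ring
  have inner : ∀ a ∈ A, ∀ b ∈ A, ∀ c ∈ A, ∀ d ∈ A,
      ∑ γ : Fin n → ZMod 2, e n γ (a + b + c + d + t) = 0 := by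
    intro a ha b hb c hc d hd
    rw [sum_e, if_neg]
    intro hzero
    rw [add_eq_zero_iff] at hzero
    exact ht (hzero ▸ Finset.add_mem_add (Finset.add_mem_add (Finset.add_mem_add ha hb) hc) hd)
  have step1 : ∑ γ : Fin n → ZMod 2, (dft n A γ) ^ 4 * e n γ t
      = ((2 ^ n : ℝ)⁻¹) ^ 4 *
          ∑ γ : Fin n → ZMod 2, ∑ a ∈ A, ∑ b ∈ A, ∑ c ∈ A, ∑ d ∈ A, e n γ (a + b + c + d + t) := by
    rw [Finset.mul_sum]
    exact Finset.sum_congr rfl fun γ _ => key γ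
  rw [step1]
  have step2 : ∑ γ : Fin n → ZMod 2, ∑ a ∈ A, ∑ b ∈ A, ∑ c ∈ A, ∑ d ∈ A,
      e n γ (a + b + c + d + t) = 0 := by
    rw [swap5]
    exact Finset.sum_eq_zero fun a ha => Finset.sum_eq_zero fun b hb =>
      Finset.sum_eq_zero fun c hc => Finset.sum_eq_zero fun d hd => inner a ha b hb c hc d hd
  rw [step2, mul_zero]

lemma dft_zero (n : ℕ) (A : Finset (Fin n → ZMod 2)) :
    dft n A 0 = (A.card : ℝ) / 2 ^ n := by
  rw [dft_eq]
  rw [Finset.sum_congr rfl fun x _ => e_zero_left n x]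
  rw [Finset.sum_const, nsmul_eq_mul, mul_one]
  rw [div_eq_inv_mul]

end FourAux

open FourAux in
/-- If `A+A+A+A` is not all of `𝔽₂ⁿ` then `A` has a nontrivial Fourier coefficient of size
at least `α^{3/2}`. -/
theorem large_coefficient_of_fourfold_sumset_ne_univ
    (n : ℕ) (A : Finset (Fin n → ZMod 2)) (hA : A.Nonempty)
    (h : A + A + A + A ≠ Finset.univ) :
    ∃ γ : Fin n → ZMod 2, γ ≠ 0 ∧
      ((A.card : ℝ) / 2 ^ n) ^ ((3 : ℝ) / 2) ≤ |dft n A γ| := by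
  have hne : ¬ ∀ t, t ∈ A + A + A + A := fun hall => h (Finset.eq_univ_iff_forall.mpr hall)
  push_neg at hne
  obtain ⟨t, ht⟩ := hne
  set α : ℝ := (A.card : ℝ) / 2 ^ n with hαdef
  have hpow : (0:ℝ) < 2 ^ n := by positivity
  have hα : 0 < α := div_pos (by exact_mod_cast Finset.card_pos.mpr hA) hpow
  -- n = 0 is impossible
  rcases Nat.eq_zero_or_pos n with hn | hn
  · exfalso
    subst hn
    obtain ⟨x, hx⟩ := hA
    have hsub : Subsingleton (Fin 0 → ZMod 2) := ⟨fun f g => funext fun i => i.elim0⟩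
    have : t = x + x + x + x := hsub.allEq t _
    exact ht (this ▸ Finset.add_mem_add (Finset.add_mem_add (Finset.add_mem_add hx hx) hx) hx)
  -- the nontrivial characters form a nonempty set
  have hcard : Fintype.card (Fin n → ZMod 2) = 2 ^ n := by
    simp [Fintype.card_fun]
  have herase : ((Finset.univ : Finset (Fin n → ZMod 2)).erase 0).Nonempty := by
    rw [← Finset.card_pos, Finset.card_erase_of_mem (Finset.mem_univ 0), Finset.card_univ, hcard]
    have : 2 ≤ 2 ^ n := Nat.one_lt_two_pow_iff.mpr (by omega)
    omega
  obtain ⟨γ₀, hγ₀mem, hγ₀max⟩ :=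
    Finset.exists_max_image ((Finset.univ : Finset (Fin n → ZMod 2)).erase 0)
      (fun γ => |dft n A γ|) herase
  have hγ₀ne : γ₀ ≠ 0 := Finset.ne_of_mem_erase hγ₀mem
  refine ⟨γ₀, hγ₀ne, ?_⟩
  set M : ℝ := |dft n A γ₀| with hMdef
  have hMnn : 0 ≤ M := abs_nonneg _
  -- first inequality : α ^ 4 ≤ sum over nontrivial characters of dft ^ 4
  have hK := fourfold n A t ht
  have hsplit : (dft n A 0) ^ 4 * e n 0 t +
      ∑ γ ∈ (Finset.univ : Finset (Fin n → ZMod 2)).erase 0, (dft n A γ) ^ 4 * e n γ t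
        = ∑ γ : Fin n → ZMod 2, (dft n A γ) ^ 4 * e n γ t :=
    Finset.add_sum_erase Finset.univ (fun γ => (dft n A γ) ^ 4 * e n γ t)
      (Finset.mem_univ (0 : Fin n → ZMod 2))
  rw [hK, dft_zero, e_zero_left, mul_one] at hsplit
  have h1 : α ^ 4 ≤ ∑ γ ∈ (Finset.univ : Finset (Fin n → ZMod 2)).erase 0, (dft n A γ) ^ 4 := by
    have heq : α ^ 4 = -(∑ γ ∈ (Finset.univ : Finset (Fin n → ZMod 2)).erase 0,
        (dft n A γ) ^ 4 * e n γ t) := by linarith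
    calc α ^ 4 = -(∑ γ ∈ (Finset.univ : Finset (Fin n → ZMod 2)).erase 0,
            (dft n A γ) ^ 4 * e n γ t) := heq
      _ ≤ |∑ γ ∈ (Finset.univ : Finset (Fin n → ZMod 2)).erase 0,
            (dft n A γ) ^ 4 * e n γ t| := neg_le_abs _
      _ ≤ ∑ γ ∈ (Finset.univ : Finset (Fin n → ZMod 2)).erase 0,
            |(dft n A γ) ^ 4 * e n γ t| := Finset.abs_sum_le_sum_abs _ _
      _ = ∑ γ ∈ (Finset.univ : Finset (Fin n → ZMod 2)).erase 0, (dft n A γ) ^ 4 := by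
          refine Finset.sum_congr rfl fun γ _ => ?_
          rw [abs_mul, e_abs, mul_one, abs_of_nonneg (by positivity)]
  -- second inequality : sum of dft ^ 4 over nontrivial characters is at most M ^ 2 * α
  have h2 : ∑ γ ∈ (Finset.univ : Finset (Fin n → ZMod 2)).erase 0, (dft n A γ) ^ 4
      ≤ M ^ 2 * α := by
    calc ∑ γ ∈ (Finset.univ : Finset (Fin n → ZMod 2)).erase 0, (dft n A γ) ^ 4
        ≤ ∑ γ ∈ (Finset.univ : Finset (Fin n → ZMod 2)).erase 0, M ^ 2 * (dft n A γ) ^ 2 := by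
          refine Finset.sum_le_sum fun γ hγ => ?_
          have habs : |dft n A γ| ≤ M := hγ₀max γ hγ
          have : (dft n A γ) ^ 2 ≤ M ^ 2 := by
            rw [← sq_abs]
            exact pow_le_pow_left₀ (abs_nonneg _) habs 2
          calc (dft n A γ) ^ 4 = (dft n A γ) ^ 2 * (dft n A γ) ^ 2 := by ring
            _ ≤ M ^ 2 * (dft n A γ) ^ 2 :=
                mul_le_mul_of_nonneg_right this (sq_nonneg _)
      _ = M ^ 2 * ∑ γ ∈ (Finset.univ : Finset (Fin n → ZMod 2)).erase 0, (dft n A γ) ^ 2 := by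
          rw [Finset.mul_sum]
      _ ≤ M ^ 2 * ∑ γ : Fin n → ZMod 2, (dft n A γ) ^ 2 := by
          refine mul_le_mul_of_nonneg_left ?_ (sq_nonneg _)
          exact Finset.sum_le_sum_of_subset_of_nonneg (Finset.subset_univ _)
            (fun γ _ _ => sq_nonneg _)
      _ = M ^ 2 * α := by rw [parseval]
  -- conclude
  have h3 : α ^ 3 ≤ M ^ 2 := by
    have h4 : α ^ 3 * α ≤ M ^ 2 * α := by
      calc α ^ 3 * α = α ^ 4 := by ring
        _ ≤ M ^ 2 * α := le_trans h1 h2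
    exact le_of_mul_le_mul_right h4 hα
  have hrpow : α ^ ((3:ℝ)/2) = Real.sqrt (α ^ 3) := by
    rw [show (3:ℝ)/2 = (3:ℝ) * (1/2) by ring, Real.rpow_mul hα.le,
      Real.sqrt_eq_rpow]
    norm_num
  rw [hrpow]
  calc Real.sqrt (α ^ 3) ≤ Real.sqrt (M ^ 2) := Real.sqrt_le_sqrt h3
    _ = M := by rw [Real.sqrt_sq hMnn]
end

section
/- Let G = 𝔽₂ⁿ, let W ≤ G be a codimension-1 subspace with cosets x+W and x'+W, and let A, B ⊆ G with |A+B| ≤ K|B|. Write A₁ = A ∩ (x+W), B₁ = B ∩ (x+W), B₂ = B ∩ (x'+W). If A₁ and B are nonempty, then |A₁+B₁| + |A₁+B₂| ≤ K(|B₁| + |B₂|); in particular there is some i ∈ {1,2} with Bᵢ nonempty and |A₁+Bᵢ| ≤ K|Bᵢ|. -/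
open Finset Pointwise
open scoped Classical

lemma index_two_key (n : ℕ) (W : Submodule (ZMod 2) (Fin n → ZMod 2))
    (hW : Module.finrank (ZMod 2) W + 1 = n)
    (u v : Fin n → ZMod 2) (hu : u ∉ W) (hv : v ∉ W) : u - v ∈ W := by
  set Q := (Fin n → ZMod 2) ⧸ W
  have hq : Module.finrank (ZMod 2) Q + Module.finrank (ZMod 2) W
      = Module.finrank (ZMod 2) (Fin n → ZMod 2) :=
    Submodule.finrank_quotient_add_finrank W
  have hn : Module.finrank (ZMod 2) (Fin n → ZMod 2) = n := by
    simp [Module.finrank_pi]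
  have h1 : Module.finrank (ZMod 2) Q = 1 := by omega
  have b : Module.Basis (Fin 1) (ZMod 2) Q := Module.finBasisOfFinrankEq _ _ h1
  have key : ∀ q : Q, q ≠ 0 → q = b 0 := by
    intro q hq0
    have hrep : q = b.repr q 0 • b 0 := by
      conv_lhs => rw [← b.sum_repr q]
      simp
    have hc : b.repr q 0 ≠ 0 := by
      intro h; apply hq0; rw [hrep, h, zero_smul]
    have hall : ∀ c : ZMod 2, c ≠ 0 → c = 1 := by decide
    have : b.repr q 0 = 1 := hall _ hc
    rw [hrep, this, one_smul]
  have hu' : W.mkQ u ≠ 0 := by simpa [Submodule.Quotient.mk_eq_zero] using hu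
  have hv' : W.mkQ v ≠ 0 := by simpa [Submodule.Quotient.mk_eq_zero] using hv
  have : W.mkQ (u - v) = 0 := by
    rw [map_sub, key _ hu', key _ hv', sub_self]
  rwa [Submodule.mkQ_apply, Submodule.Quotient.mk_eq_zero] at this

/-- Restricting the doubling hypothesis to the two cosets of a codimension-1 subspace:
`|A₁+B₁| + |A₁+B₂| ≤ K(|B₁|+|B₂|)`, and hence one of the two pieces has small doubling. -/
theorem doubling_on_cosets
    (n : ℕ) (W : Submodule (ZMod 2) (Fin n → ZMod 2))
    (hW : Module.finrank (ZMod 2) W + 1 = n)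
    (x x' : Fin n → ZMod 2) (hxx' : x' - x ∉ W)
    (A B : Finset (Fin n → ZMod 2)) (K : ℝ) (hK : 1 ≤ K)
    (hadd : ((A + B).card : ℝ) ≤ K * B.card)
    (A₁ B₁ B₂ : Finset (Fin n → ZMod 2))
    (hA₁ : A₁ = {a ∈ A | a - x ∈ W})
    (hB₁ : B₁ = {b ∈ B | b - x ∈ W})
    (hB₂ : B₂ = {b ∈ B | b - x' ∈ W})
    (hA₁ne : A₁.Nonempty) (hBne : B.Nonempty) :
    (((A₁ + B₁).card : ℝ) + (A₁ + B₂).card ≤ K * ((B₁.card : ℝ) + B₂.card)) ∧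
    ((B₁.Nonempty ∧ ((A₁ + B₁).card : ℝ) ≤ K * B₁.card) ∨
      (B₂.Nonempty ∧ ((A₁ + B₂).card : ℝ) ≤ K * B₂.card)) := by
  -- B = B₁ ∪ B₂ disjointly
  have hBdisj : Disjoint B₁ B₂ := by
    rw [Finset.disjoint_left]
    intro b hb1 hb2
    rw [hB₁, Finset.mem_filter] at hb1
    rw [hB₂, Finset.mem_filter] at hb2
    exact hxx' (by simpa using W.sub_mem hb1.2 hb2.2)
  have hBunion : B = B₁ ∪ B₂ := by
    ext b
    simp only [hB₁, hB₂, Finset.mem_union, Finset.mem_filter]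
    constructor
    · intro hb
      by_cases h : b - x ∈ W
      · exact Or.inl ⟨hb, h⟩
      · refine Or.inr ⟨hb, ?_⟩
        have h4 := index_two_key n W hW (b - x) (x' - x) h hxx'
        have h5 : b - x - (x' - x) = b - x' := by ring
        rwa [h5] at h4
    · rintro (⟨h, _⟩ | ⟨h, _⟩) <;> exact h
  have hBcard : (B.card : ℝ) = B₁.card + B₂.card := by
    rw [hBunion, Finset.card_union_of_disjoint hBdisj]; push_cast; ring
  -- sumsets are inside A+B and disjoint
  have hsub1 : A₁ + B₁ ⊆ A + B :=
    Finset.add_subset_add (by rw [hA₁]; exact Finset.filter_subset _ _)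
      (by rw [hB₁]; exact Finset.filter_subset _ _)
  have hsub2 : A₁ + B₂ ⊆ A + B :=
    Finset.add_subset_add (by rw [hA₁]; exact Finset.filter_subset _ _)
      (by rw [hB₂]; exact Finset.filter_subset _ _)
  have hdisj : Disjoint (A₁ + B₁) (A₁ + B₂) := by
    rw [Finset.disjoint_left]
    intro c hc1 hc2
    rw [Finset.mem_add] at hc1 hc2
    obtain ⟨a, ha, b, hb, rfl⟩ := hc1
    obtain ⟨a', ha', b', hb', hab⟩ := hc2
    rw [hA₁, Finset.mem_filter] at ha ha'
    rw [hB₁, Finset.mem_filter] at hb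
    rw [hB₂, Finset.mem_filter] at hb'
    -- a+b ∈ W-coset of 0 vs coset of x+x'
    have h1 : a + b ∈ W := by
      have := W.add_mem ha.2 hb.2
      have h2 : a - x + (b - x) = a + b - (x + x) := by ring
      have hxx : x + x = 0 := by
        ext i; have : (2 : ZMod 2) = 0 := rfl
        simpa [two_mul] using congrArg (· * x i) this
      rw [h2, hxx, sub_zero] at this; exact this
    have h2 : a' + b' - (x + x') ∈ W := by
      have := W.add_mem ha'.2 hb'.2
      have h3 : a' - x + (b' - x') = a' + b' - (x + x') := by ring
      rwa [h3] at this
    rw [hab] at h2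
    have : x + x' ∈ W := by
      have := W.sub_mem h1 h2
      simpa using this
    apply hxx'
    have hx2 : x + x = 0 := by
      ext i; have h0 : (2 : ZMod 2) = 0 := rfl
      simpa [two_mul] using congrArg (· * x i) h0
    have : x' - x = x + x' := by
      have : x' - x - (x + x') = -(x+x) := by ring
      rw [hx2] at this; simpa [sub_eq_zero] using this
    rwa [this]
  have hcard : ((A₁ + B₁).card : ℝ) + (A₁ + B₂).card ≤ (A + B).card := by
    have := Finset.card_union_of_disjoint hdisj
    have hsub : (A₁ + B₁) ∪ (A₁ + B₂) ⊆ A + B := Finset.union_subset hsub1 hsub2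
    have := Finset.card_le_card hsub
    rw [Finset.card_union_of_disjoint hdisj] at this
    push_cast
    exact_mod_cast this
  have main : ((A₁ + B₁).card : ℝ) + (A₁ + B₂).card ≤ K * ((B₁.card : ℝ) + B₂.card) := by
    rw [← hBcard]; linarith
  refine ⟨main, ?_⟩
  by_contra hcon
  push_neg at hcon
  obtain ⟨h1, h2⟩ := hcon
  -- B nonempty means B₁ or B₂ nonempty
  have : B₁.Nonempty ∨ B₂.Nonempty := by
    obtain ⟨b, hb⟩ := hBne
    rw [hBunion, Finset.mem_union] at hb
    exact hb.imp (fun h => ⟨b, h⟩) (fun h => ⟨b, h⟩)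
  rcases this with hne | hne
  · have hlt1 := h1 hne
    by_cases hne2 : B₂.Nonempty
    · have hlt2 := h2 hne2
      linarith
    · have : B₂ = ∅ := Finset.not_nonempty_iff_eq_empty.mp hne2
      have hAe : (A₁ + B₂) = ∅ := by rw [this]; simp
      rw [hAe, this] at main
      simp at main
      linarith
  · have hlt2 := h2 hne
    by_cases hne1 : B₁.Nonempty
    · have hlt1 := h1 hne1
      linarith
    · have : B₁ = ∅ := Finset.not_nonempty_iff_eq_empty.mp hne1
      have hAe : (A₁ + B₁) = ∅ := by rw [this]; simp
      rw [hAe, this] at main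
      simp at main
      linarith
end
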